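/- arXiv:math/0609793 — 9 statements merged into one kernel-verified Lean document; each statement's English description precedes it below -/
import Mathlib

section
/- If O is a maximal order of ℍ(K) containing the order L = O_K + i·O_K + j·O_K + k·O_K, then 2q ∈ L for every q ∈ O. -/
open Quaternion NumberField

/-- If `O` is a maximal order of `ℍ(K)` containing the standard order
`L = 𝓞 K + i 𝓞 K + j 𝓞 K + k 𝓞 K`, then `2q ∈ L` for every `q ∈ O`, i.e. all
coordinates of `2q` are algebraic integers. -/
theorem stmt6 {K : Type*} [Field K] [NumberField K]
    (O : Subalgebra (𝓞 K) ℍ[K]) (hfg : O.toSubmodule.FG)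
    (hspan : Submodule.span K (O : Set ℍ[K]) = ⊤)
    (hint : ∀ x ∈ O, IsIntegral ℤ (2 * x.re) ∧ IsIntegral ℤ (normSq x))
    (hmax : ∀ O' : Subalgebra (𝓞 K) ℍ[K], O'.toSubmodule.FG →
      (∀ x ∈ O', IsIntegral ℤ (2 * x.re) ∧ IsIntegral ℤ (normSq x)) →
      O ≤ O' → O' = O)
    (hi : (⟨0, 1, 0, 0⟩ : ℍ[K]) ∈ O) (hj : (⟨0, 0, 1, 0⟩ : ℍ[K]) ∈ O)
    (hk : (⟨0, 0, 0, 1⟩ : ℍ[K]) ∈ O) :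
    ∀ q ∈ O, IsIntegral ℤ (2 * q.re) ∧ IsIntegral ℤ (2 * q.imI) ∧
      IsIntegral ℤ (2 * q.imJ) ∧ IsIntegral ℤ (2 * q.imK) := by
  intro q hq
  have hre := (hint q hq).1
  have hI := (hint _ (O.mul_mem hq hi)).1
  have hJ := (hint _ (O.mul_mem hq hj)).1
  have hK := (hint _ (O.mul_mem hq hk)).1
  erw [Quaternion.re_mul] at hI hJ hK
  refine ⟨hre, ?_, ?_, ?_⟩
  · have : IsIntegral ℤ (-(2 * q.imI)) := by
      convert hI using 1; ring
    simpa using this.neg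
  · have : IsIntegral ℤ (-(2 * q.imJ)) := by
      convert hJ using 1; ring
    simpa using this.neg
  · have : IsIntegral ℤ (-(2 * q.imK)) := by
      convert hK using 1; ring
    simpa using this.neg
end

section
/- If L is an order in ℍ(K) and q ∈ L is L-primitive (not divisible by any non-unit of O_K), then qL ∩ K = nr(q)·O_K, and likewise Lq̄ ∩ K = nr(q)·O_K. -/
open Quaternion NumberField

set_option synthInstance.maxHeartbeats 1000000
set_option maxHeartbeats 4000000

theorem aux_int {K : Type*} [Field K] [NumberField K]
    (L : Subalgebra (𝓞 K) ℍ[K]) (hfg : L.toSubmodule.FG) {x : ℍ[K]} (hx : x ∈ L) :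
    IsIntegral ℤ x := by
  haveI : Module.Finite (𝓞 K) L := Module.Finite.iff_fg.mpr hfg
  haveI : Module.Finite ℤ (𝓞 K) := inferInstance
  haveI : Module.Finite ℤ L := Module.Finite.trans (𝓞 K) L
  have h := IsIntegral.of_finite ℤ (⟨x, hx⟩ : L)
  exact h.map (L.val.toRingHom.toIntAlgHom)

theorem aux_star_int {K : Type*} [Field K] {x : ℍ[K]} (hx : IsIntegral ℤ x) :
    IsIntegral ℤ (star x) := by
  obtain ⟨p, hm, hp⟩ := hx
  refine ⟨p, hm, ?_⟩
  have key : ∀ r : Polynomial ℤ, Polynomial.eval₂ (algebraMap ℤ ℍ[K]) (star x) r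
      = star (Polynomial.eval₂ (algebraMap ℤ ℍ[K]) x r) := by
    intro r
    induction r using Polynomial.induction_on' with
    | add u v hu hv => simp only [Polynomial.eval₂_add, hu, hv, star_add]
    | monomial n a =>
      simp only [Polynomial.eval₂_monomial, star_mul, star_pow, algebraMap_int_eq,
        eq_intCast, star_intCast]
      exact Int.cast_comm a _
  rw [key, hp, star_zero]

theorem aux_trace_int {K : Type*} [Field K] {x : ℍ[K]} (hx : IsIntegral ℤ x) :
    IsIntegral ℤ (2 * x.re : K) := by
  have hs : IsIntegral ℤ (star x) := aux_star_int hx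
  have hxs : x * star x = star x * x :=
    (Quaternion.self_mul_star x).trans (Quaternion.star_mul_self x).symm
  have hcomm : ∀ a ∈ ({x, star x} : Set ℍ[K]), ∀ b ∈ ({x, star x} : Set ℍ[K]),
      a * b = b * a := by
    rintro a (rfl | rfl) b (rfl | rfl)
    · rfl
    · exact hxs
    · exact hxs.symm
    · rfl
  set C := Algebra.adjoin ℤ ({x, star x} : Set ℍ[K]) with hC
  letI commC : CommRing C := Algebra.adjoinCommRingOfComm ℤ hcomm
  have hxC : x ∈ C := Algebra.subset_adjoin (by simp)
  have hsC : star x ∈ C := Algebra.subset_adjoin (by simp)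
  let v : C →ₐ[ℤ] ℍ[K] :=
    { toFun := Subtype.val, map_one' := rfl, map_mul' := fun _ _ => rfl,
      map_zero' := rfl, map_add' := fun _ _ => rfl,
      commutes' := fun r => rfl }
  have hvinj : Function.Injective v := fun a b h => Subtype.ext h
  have h1 : IsIntegral ℤ (⟨x, hxC⟩ : C) := (isIntegral_algHom_iff v hvinj).mp hx
  have h2 : IsIntegral ℤ (⟨star x, hsC⟩ : C) := (isIntegral_algHom_iff v hvinj).mp hs
  have h3 : IsIntegral ℤ (x + star x) := by
    have h4 := (h1.add h2).map v
    have h5 : v (⟨x, hxC⟩ + ⟨star x, hsC⟩) = x + star x := by rw [map_add]; rfl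
    rwa [h5] at h4
  rw [Quaternion.self_add_star'] at h3
  exact (isIntegral_algHom_iff (algebraMap K ℍ[K]).toIntAlgHom
    (Quaternion.coe_injective (R := K))).mp h3

theorem aux_scalar_int {K : Type*} [Field K] {a : K}
    (h : IsIntegral ℤ ((a : ℍ[K]))) : IsIntegral ℤ a :=
  (isIntegral_algHom_iff (algebraMap K ℍ[K]).toIntAlgHom
    (Quaternion.coe_injective (R := K))).mp h

theorem aux_star_mem {K : Type*} [Field K] [NumberField K]
    (L : Subalgebra (𝓞 K) ℍ[K]) (hfg : L.toSubmodule.FG) {x : ℍ[K]} (hx : x ∈ L) :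
    star x ∈ L := by
  have ht : IsIntegral ℤ (2 * x.re : K) := aux_trace_int (aux_int L hfg hx)
  have h2 : algebraMap (𝓞 K) ℍ[K] ⟨2 * x.re, ht⟩ = ((2 * x.re : K) : ℍ[K]) := by
    exact IsScalarTower.algebraMap_apply (𝓞 K) K ℍ[K] _
  have h3 : star x = algebraMap (𝓞 K) ℍ[K] ⟨2 * x.re, ht⟩ - x := by
    rw [h2, eq_sub_iff_add_eq, ← Quaternion.self_add_star']
    rw [add_comm]
  rw [h3]
  exact sub_mem (Subalgebra.algebraMap_mem L _) hx

/-- If `L` is an order in `ℍ(K)` (with `𝓞 K` a PID) and `q ∈ L` is `L`-primitive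
(not divisible by any non-unit of `𝓞 K`), then `qL ∩ K = nr(q)·𝓞 K`, and likewise
`L q̄ ∩ K = nr(q)·𝓞 K`. -/
theorem stmt9 {K : Type*} [Field K] [NumberField K]
    (h1 : IsPrincipalIdealRing (𝓞 K))
    (L : Subalgebra (𝓞 K) ℍ[K]) (hfg : L.toSubmodule.FG)
    (hspan : Submodule.span K (L : Set ℍ[K]) = ⊤)
    (q : ℍ[K]) (hqL : q ∈ L)
    (hprim : ∀ (α : 𝓞 K) (r : ℍ[K]), r ∈ L →
      q = algebraMap (𝓞 K) ℍ[K] α * r → IsUnit α) :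
    (∀ a : K, (∃ x ∈ L, (a : ℍ[K]) = q * x) ↔
      ∃ c : 𝓞 K, a = normSq q * algebraMap (𝓞 K) K c) ∧
    (∀ a : K, (∃ x ∈ L, (a : ℍ[K]) = x * star q) ↔
      ∃ c : 𝓞 K, a = normSq q * algebraMap (𝓞 K) K c) := by
  have hstarq : star q ∈ L := aux_star_mem L hfg hqL
  have key : ∀ a : K, (∃ x ∈ L, (a : ℍ[K]) = q * x) ↔
      ∃ c : 𝓞 K, a = normSq q * algebraMap (𝓞 K) K c := by
    intro a
    constructor
    · rintro ⟨x, hxL, hax⟩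
      by_cases ha : a = 0
      · exact ⟨0, by simp [ha]⟩
      -- basic identity : normSq q • x = a • star q
      have e1 : normSq q • x = a • star q := by
        have e0 : star q * (a : ℍ[K]) = star q * (q * x) := by rw [hax]
        rw [← mul_assoc, Quaternion.star_mul_self, Quaternion.mul_coe_eq_smul,
          Quaternion.coe_mul_eq_smul] at e0
        exact e0.symm
      have hn0 : normSq q ≠ 0 := by
        intro h
        rw [h, zero_smul] at e1
        have hsq : star q = 0 := by
          have := (smul_eq_zero.mp e1.symm).resolve_left ha
          exact this
        have hq0 : q = 0 := by simpa using congrArg star hsq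
        rw [hq0, zero_mul] at hax
        exact ha (Quaternion.coe_injective (by simpa using hax))
      -- integrality: a and normSq q are in 𝓞 K
      have haL : ((a : ℍ[K])) ∈ L := by rw [hax]; exact mul_mem hqL hxL
      have haI : IsIntegral ℤ a := aux_scalar_int (aux_int L hfg haL)
      have hnL : (((normSq q : K)) : ℍ[K]) ∈ L := by
        rw [← Quaternion.self_mul_star]; exact mul_mem hqL hstarq
      have hnI : IsIntegral ℤ (normSq q) := aux_scalar_int (aux_int L hfg hnL)
      set aO : 𝓞 K := ⟨a, haI⟩ with haO
      set nO : 𝓞 K := ⟨normSq q, hnI⟩ with hnO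
      have hnO0 : nO ≠ 0 := by
        intro h
        apply hn0
        have h' := congrArg (algebraMap (𝓞 K) K) h
        rw [map_zero] at h'
        exact h'
      -- gcd via principal ideals
      obtain ⟨d, hd⟩ := (h1.principal (Ideal.span {aO, nO})).principal
      have hd' : Ideal.span {aO, nO} = Ideal.span {d} := hd
      have hda : d ∣ aO :=
        Ideal.mem_span_singleton.mp (hd' ▸ Ideal.subset_span (by simp))
      have hdn : d ∣ nO :=
        Ideal.mem_span_singleton.mp (hd' ▸ Ideal.subset_span (by simp))
      obtain ⟨s, t, hst⟩ : ∃ s t, s * aO + t * nO = d :=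
        Ideal.mem_span_pair.mp
          (show d ∈ Ideal.span {aO, nO} from hd'.symm ▸ Ideal.mem_span_singleton_self d)
      obtain ⟨a', ha'⟩ := hda
      obtain ⟨n', hn'⟩ := hdn
      have hd0 : d ≠ 0 := by
        intro h
        rw [h, zero_mul] at hn'
        exact hnO0 hn'
      have hone : s * a' + t * n' = 1 := by
        apply mul_left_cancel₀ hd0
        rw [mul_one]
        calc d * (s * a' + t * n') = s * (d * a') + t * (d * n') := by ring
        _ = s * aO + t * nO := by rw [← ha', ← hn']
        _ = d := hst
      -- e1 with 𝓞 K scalars, cancel d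
      have e2 : (nO : 𝓞 K) • x = aO • star q := by
        have h1' : (nO : 𝓞 K) • x = normSq q • x := by
          rw [← algebraMap_smul K nO x]; rfl
        have h2' : (aO : 𝓞 K) • star q = a • star q := by
          rw [← algebraMap_smul K aO (star q)]; rfl
        rw [h1', h2', e1]
      have e3 : n' • x = a' • star q := by
        have hdK : (algebraMap (𝓞 K) K d) ≠ 0 := by
          simpa using fun h => hd0 ((map_eq_zero_iff _
            (FaithfulSMul.algebraMap_injective (𝓞 K) K)).mp h)
        have expand : ∀ (u : 𝓞 K) (y : ℍ[K]), algebraMap (𝓞 K) K d • (u • y)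
            = (d * u) • y := by
          intro u y
          rw [algebraMap_smul, smul_smul]
        refine smul_right_injective ℍ[K] hdK ?_
        show algebraMap (𝓞 K) K d • (n' • x) = algebraMap (𝓞 K) K d • (a' • star q)
        rw [expand, expand, ← hn', ← ha', e2]
      have e4 : n' • star x = a' • q := by
        have := congrArg star e3
        rwa [Quaternion.star_smul, Quaternion.star_smul, star_star] at this
      -- primitivity
      have e5 : n' • (s • star x + t • q) = q := by
        have step : n' • (s • star x + t • q) = s • (n' • star x) + (t * n') • q := by
          rw [smul_add, smul_smul, smul_smul, mul_comm n' s, ← smul_smul, mul_comm n' t]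
        rw [step, e4, smul_smul, ← add_smul, hone, one_smul]
      have hmem : s • star x + t • q ∈ L :=
        add_mem (L.smul_mem (aux_star_mem L hfg hxL) s) (L.smul_mem hqL t)
      have hu : IsUnit n' := by
        apply hprim n' (s • star x + t • q) hmem
        rw [← Algebra.smul_def]
        exact e5.symm
      obtain ⟨v', hv'⟩ := hu.exists_right_inv
      refine ⟨a' * v', ?_⟩
      have hfin : nO * (a' * v') = aO := by
        calc nO * (a' * v') = (d * a') * (n' * v') := by rw [hn']; ring
        _ = aO := by rw [hv', mul_one, ← ha']
      have := congrArg (algebraMap (𝓞 K) K) hfin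
      rw [map_mul] at this
      have hnK : algebraMap (𝓞 K) K nO = normSq q := rfl
      have haK : algebraMap (𝓞 K) K aO = a := rfl
      rw [hnK, haK] at this
      exact this.symm
    · rintro ⟨c, hc⟩
      refine ⟨algebraMap (𝓞 K) ℍ[K] c * star q,
        mul_mem (Subalgebra.algebraMap_mem L c) hstarq, ?_⟩
      have hcc : algebraMap (𝓞 K) ℍ[K] c = ((algebraMap (𝓞 K) K c : K) : ℍ[K]) := by
        rw [IsScalarTower.algebraMap_apply (𝓞 K) K ℍ[K]]
        rfl
      rw [hcc, ← mul_assoc, ← Quaternion.coe_commutes, mul_assoc,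
        Quaternion.self_mul_star, ← Quaternion.coe_mul, hc, mul_comm (normSq q)]
  refine ⟨key, fun a => ?_⟩
  rw [← key a]
  constructor
  · rintro ⟨x, hxL, hax⟩
    refine ⟨star x, aux_star_mem L hfg hxL, ?_⟩
    have := congrArg star hax
    rwa [star_mul, star_star, Quaternion.star_coe] at this
  · rintro ⟨y, hyL, hay⟩
    refine ⟨star y, aux_star_mem L hfg hyL, ?_⟩
    have := congrArg star hay
    rwa [star_mul, Quaternion.star_coe] at this
end

section
/- If J ⊆ I are full O_K-lattices (ideals) in ℍ(K), then the K-index [I : J]_K factors as [I ∩ K : J ∩ K]_K · [Im(I) : Im(J)]_K, where Im denotes the image under the projection x ↦ (x - x̄)/2 onto the pure quaternions; all indices are (principal) ideals of O_K. -/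
open Quaternion NumberField

/-- The projection `x ↦ (x - x̄)/2` of a quaternion onto its pure (imaginary) part,
written in coordinates as a `K`-linear map `ℍ(K) → K³`. -/
noncomputable def imVec (K : Type*) [Field K] : ℍ[K] →ₗ[K] (Fin 3 → K) where
  toFun x := ![x.imI, x.imJ, x.imK]
  map_add' x y := by funext i; fin_cases i <;> simp
  map_smul' a x := by funext i; fin_cases i <;> simp

set_option linter.unusedSectionVars false
set_option maxHeartbeats 1000000

section Aux

variable {K : Type*} [Field K] [NumberField K]


lemma repr_integral {V : Type*} [AddCommGroup V] [Module K V] [Module (𝓞 K) V]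
    [IsScalarTower (𝓞 K) K V] {n : ℕ} (c : Module.Basis (Fin n) K V) {x : V}
    (hx : x ∈ Submodule.span (𝓞 K) (Set.range ⇑c)) (i : Fin n) :
    ∃ y : 𝓞 K, algebraMap (𝓞 K) K y = c.repr x i := by
  classical
  induction hx using Submodule.span_induction with
  | mem z hz =>
    obtain ⟨j, rfl⟩ := hz
    refine ⟨if j = i then 1 else 0, ?_⟩
    simp [Module.Basis.repr_self, Finsupp.single_apply, apply_ite (algebraMap (𝓞 K) K)]
  | zero => exact ⟨0, by simp⟩
  | add z w _ _ hz hw =>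
    obtain ⟨u, hu⟩ := hz; obtain ⟨v, hv⟩ := hw
    exact ⟨u + v, by simp [map_add, hu, hv]⟩
  | smul r z _ hz =>
    obtain ⟨u, hu⟩ := hz
    refine ⟨r * u, ?_⟩
    rw [← algebraMap_smul K r z, map_smul, map_mul, hu]
    simp [Algebra.smul_def]

set_option linter.unusedSectionVars false

lemma OK_noZeroSMul {V : Type*} [AddCommGroup V] [Module K V] [Module (𝓞 K) V]
    [IsScalarTower (𝓞 K) K V] : NoZeroSMulDivisors (𝓞 K) V := by
  constructor
  intro c x h
  rw [← algebraMap_smul K c x] at h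
  rcases smul_eq_zero.mp h with h | h
  · left
    exact (map_eq_zero_iff _ (IsFractionRing.injective (𝓞 K) K)).mp h
  · right; exact h

lemma latticeBasis {V : Type*} [AddCommGroup V] [Module K V] [Module (𝓞 K) V]
    [IsScalarTower (𝓞 K) K V] [FiniteDimensional K V]
    (h1 : IsPrincipalIdealRing (𝓞 K)) (M : Submodule (𝓞 K) V) (hfg : M.FG)
    (hspan : Submodule.span K (M : Set V) = ⊤) :
    ∃ c : Module.Basis (Fin (Module.finrank K V)) K V,
      Submodule.span (𝓞 K) (Set.range ⇑c) = M := by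
  classical
  haveI := h1
  haveI : NoZeroSMulDivisors (𝓞 K) V := OK_noZeroSMul
  haveI : Module.Finite (𝓞 K) M := Module.Finite.iff_fg.2 hfg
  haveI : Module.Free (𝓞 K) M := Module.free_of_finite_type_torsion_free'
  set ι := Module.Free.ChooseBasisIndex (𝓞 K) M
  let b : Module.Basis ι (𝓞 K) M := Module.Free.chooseBasis (𝓞 K) M
  let b' : ι → V := fun i => (b i : V)
  have hli : LinearIndependent (𝓞 K) b' :=
    b.linearIndependent.map' M.subtype (Submodule.ker_subtype M)
  have hliK : LinearIndependent K b' := (LinearIndependent.iff_fractionRing (𝓞 K) K).mp hli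
  have hsp : Submodule.span (𝓞 K) (Set.range b') = M := by
    have : Set.range b' = M.subtype '' Set.range ⇑b := by
      rw [← Set.range_comp]; rfl
    rw [this, ← Submodule.map_span, b.span_eq, Submodule.map_top, Submodule.range_subtype]
  have hspK : Submodule.span K (Set.range b') = ⊤ := by
    rw [eq_top_iff, ← hspan]
    rw [Submodule.span_le]
    intro x hx
    have : x ∈ Submodule.span K (Submodule.span (𝓞 K) (Set.range b') : Set V) := by
      rw [hsp]; exact Submodule.subset_span hx
    rwa [Submodule.span_span_of_tower] at this
  let b'' : Module.Basis ι K V := Module.Basis.mk hliK (by rw [hspK])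
  have hcard : Fintype.card ι = Module.finrank K V := (Module.finrank_eq_card_basis b'').symm
  let e : ι ≃ Fin (Module.finrank K V) := Fintype.equivFinOfCardEq hcard
  refine ⟨b''.reindex e, ?_⟩
  have : Set.range ⇑(b''.reindex e) = Set.range b' := by
    rw [Module.Basis.range_reindex]
    rw [show ⇑b'' = b' from Module.Basis.coe_mk _ _]
  rw [this, hsp]

lemma index_span {V : Type*} [AddCommGroup V] [Module K V] [Module (𝓞 K) V]
    [IsScalarTower (𝓞 K) K V] [FiniteDimensional K V] {n : ℕ}
    (s : Module.Basis (Fin n) K V) {M N : Submodule (𝓞 K) V}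
    (α : V →ₗ[K] V) (hinj : Function.Injective α)
    (hMN : Submodule.map (α.restrictScalars (𝓞 K)) M = N)
    (cM cN : Module.Basis (Fin n) K V)
    (hcM : Submodule.span (𝓞 K) (Set.range ⇑cM) = M)
    (hcN : Submodule.span (𝓞 K) (Set.range ⇑cN) = N) :
    Submodule.span (𝓞 K) {LinearMap.det α}
      = Submodule.span (𝓞 K) {s.det ⇑cN * (s.det ⇑cM)⁻¹} := by
  classical
  set e := LinearEquiv.ofInjectiveEndo α hinj with he
  have hE : ∀ x, e x = α x := fun x => rfl
  have hmem : ∀ x ∈ M, α x ∈ N := fun x hx => hMN ▸ Submodule.mem_map_of_mem hx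
  have hmem' : ∀ y ∈ N, e.symm y ∈ M := by
    intro y hy
    rw [← hMN] at hy
    obtain ⟨x, hx, rfl⟩ := hy
    have : e.symm (α x) = x := by rw [← hE, LinearEquiv.symm_apply_apply]
    rwa [show ((α.restrictScalars (𝓞 K)) x : V) = α x from rfl, this]
  set P := LinearMap.toMatrix cM cN α with hP
  set Q := LinearMap.toMatrix cN cM (e.symm : V →ₗ[K] V) with hQ
  have hPQ : P * Q = 1 := by
    rw [hP, hQ, ← LinearMap.toMatrix_comp cN cM cN]
    have : α ∘ₗ (e.symm : V →ₗ[K] V) = LinearMap.id := by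
      ext x; simp [← hE]
    rw [this, LinearMap.toMatrix_id]
  have hQP : Q * P = 1 := by
    rw [hP, hQ, ← LinearMap.toMatrix_comp cM cN cM]
    have : (e.symm : V →ₗ[K] V) ∘ₗ α = LinearMap.id := by
      ext x; simp [← hE]
    rw [this, LinearMap.toMatrix_id]
  have hPint : ∀ i j, ∃ y : 𝓞 K, algebraMap (𝓞 K) K y = P i j := by
    intro i j
    rw [hP, LinearMap.toMatrix_apply]
    refine repr_integral cN ?_ i
    rw [hcN]
    exact hmem _ (hcM ▸ Submodule.subset_span ⟨j, rfl⟩)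
  have hQint : ∀ i j, ∃ y : 𝓞 K, algebraMap (𝓞 K) K y = Q i j := by
    intro i j
    rw [hQ, LinearMap.toMatrix_apply]
    refine repr_integral cM ?_ i
    rw [hcM]
    exact hmem' _ (hcN ▸ Submodule.subset_span ⟨j, rfl⟩)
  set P' : Matrix (Fin n) (Fin n) (𝓞 K) := fun i j => (hPint i j).choose with hP'
  set Q' : Matrix (Fin n) (Fin n) (𝓞 K) := fun i j => (hQint i j).choose with hQ'
  have hPmap : P'.map (algebraMap (𝓞 K) K) = P := by
    ext i j; exact (hPint i j).choose_spec
  have hQmap : Q'.map (algebraMap (𝓞 K) K) = Q := by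
    ext i j; exact (hQint i j).choose_spec
  have hinj' : Function.Injective (algebraMap (𝓞 K) K) := IsFractionRing.injective _ _
  have h1' : P' * Q' = 1 := by
    have : (P' * Q').map (algebraMap (𝓞 K) K) = (1 : Matrix (Fin n) (Fin n) (𝓞 K)).map (algebraMap (𝓞 K) K) := by
      rw [Matrix.map_mul, hPmap, hQmap, hPQ, Matrix.map_one _ (map_zero _) (map_one _)]
    refine Matrix.ext fun i j => ?_
    exact hinj' (congrFun (congrFun this i) j)
  have hu : IsUnit P'.det := Matrix.isUnit_det_of_right_inverse h1'
  have hdet : LinearMap.det α = P'.det • (s.det ⇑cN * (s.det ⇑cM)⁻¹) := by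
    have h2 : LinearMap.det α = (cM.toMatrix ⇑cN).det * P.det := by
      rw [← LinearMap.det_toMatrix cM α]
      have h3 : LinearMap.toMatrix cM cM α = cM.toMatrix ⇑cN * P := by
        rw [hP, ← LinearMap.toMatrix_id_eq_basis_toMatrix cN cM,
          ← LinearMap.toMatrix_comp cM cN cM, LinearMap.id_comp]
      rw [h3, Matrix.det_mul]
    have h4 : (s.toMatrix ⇑cM).det * (cM.toMatrix ⇑cN).det = (s.toMatrix ⇑cN).det := by
      rw [← Matrix.det_mul, Module.Basis.toMatrix_mul_toMatrix]
    have h5 : (s.toMatrix ⇑cM).det ≠ 0 := by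
      have := s.isUnit_det cM
      rw [Module.Basis.det_apply] at this
      exact this.ne_zero
    have h6 : P.det = algebraMap (𝓞 K) K P'.det := by
      rw [← hPmap, ← RingHom.mapMatrix_apply, ← RingHom.map_det]
    rw [h2, h6, Algebra.smul_def, Module.Basis.det_apply, Module.Basis.det_apply]
    field_simp
    linear_combination (algebraMap (𝓞 K) K P'.det) * h4
  rw [hdet]
  exact Submodule.span_singleton_smul_eq hu _

lemma adapted (h1 : IsPrincipalIdealRing (𝓞 K)) (M : Submodule (𝓞 K) ℍ[K]) (hfg : M.FG)
    (hspan : Submodule.span K (M : Set ℍ[K]) = ⊤) :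
    ∃ (cM : Module.Basis (Fin 4) K ℍ[K]) (cp : Module.Basis (Fin 1) K K) (v : Module.Basis (Fin 3) K (Fin 3 → K)),
      Submodule.span (𝓞 K) (Set.range ⇑cM) = M ∧
      Submodule.span (𝓞 K) (Set.range ⇑cp)
        = Submodule.comap ((Algebra.linearMap K ℍ[K]).restrictScalars (𝓞 K)) M ∧
      Submodule.span (𝓞 K) (Set.range ⇑v)
        = Submodule.map ((imVec K).restrictScalars (𝓞 K)) M ∧
      (id (QuaternionAlgebra.basisOneIJK (-1 : K) 0 (-1)) : Module.Basis (Fin 4) K ℍ[K]).det ⇑cM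
        = cp 0 * (Pi.basisFun K (Fin 3)).det ⇑v := by
  classical
  haveI := h1
  set ℓ := (Algebra.linearMap K ℍ[K]).restrictScalars (𝓞 K) with hℓ
  set f := (imVec K).restrictScalars (𝓞 K) with hf
  set Mp := Submodule.comap ℓ M with hMp
  set Mm := Submodule.map f M with hMm
  -- the imaginary part lattice
  have hsurj : Function.Surjective (imVec K) := by
    intro y
    exact ⟨⟨0, y 0, y 1, y 2⟩, by funext i; fin_cases i <;> simp [imVec]⟩
  have hfgm : Mm.FG := hfg.map _
  have hspm : Submodule.span K (Mm : Set (Fin 3 → K)) = ⊤ := by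
    have hset : (Mm : Set (Fin 3 → K)) = ⇑(imVec K) '' ↑M := rfl
    rw [hset, Submodule.span_image, hspan, Submodule.map_top,
      LinearMap.range_eq_top.mpr hsurj]
  obtain ⟨v0, hv0⟩ := latticeBasis h1 Mm hfgm hspm
  have h3 : Module.finrank K (Fin 3 → K) = 3 := by simp
  let v : Module.Basis (Fin 3) K (Fin 3 → K) := v0.reindex (finCongr h3)
  have hv : Submodule.span (𝓞 K) (Set.range ⇑v) = Mm := by
    rw [show Set.range ⇑v = Set.range ⇑v0 from Module.Basis.range_reindex v0 _, hv0]
  -- the scalar part lattice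
  haveI hNoeth : IsNoetherian (𝓞 K) M := isNoetherian_of_fg_of_noetherian M hfg
  have hinjℓ : Function.Injective ℓ := by
    intro x y h
    exact (algebraMap K ℍ[K]).injective h
  have hAle : Submodule.map ℓ Mp ≤ M := by
    rintro x ⟨y, hy, rfl⟩
    exact hy
  have hAfg : (Submodule.map ℓ Mp).FG := by
    have heq : Submodule.map ℓ Mp
        = Submodule.map M.subtype (Submodule.comap M.subtype (Submodule.map ℓ Mp)) := by
      rw [Submodule.map_comap_subtype, inf_eq_right.mpr hAle]
    rw [heq]
    exact (IsNoetherian.noetherian _).map _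
  have hfgp : Mp.FG := Submodule.fg_of_fg_map_injective ℓ hinjℓ hAfg
  -- a nonzero scalar in M
  obtain ⟨c0, hc0⟩ := latticeBasis h1 M hfg hspan
  obtain ⟨b, hb⟩ := IsLocalization.exist_integer_multiples_of_finite
    (nonZeroDivisors (𝓞 K)) (fun i => c0.repr 1 i)
  set d := algebraMap (𝓞 K) K (b : 𝓞 K) with hd
  have hd0 : d ≠ 0 := by
    simp only [hd, ne_eq, map_eq_zero_iff _ (IsFractionRing.injective (𝓞 K) K)]
    exact nonZeroDivisors.coe_ne_zero b
  have hdMp : d ∈ Mp := by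
    have key : algebraMap K ℍ[K] d ∈ M := by
      have h1m : algebraMap K ℍ[K] d = ∑ i, (d * c0.repr 1 i) • c0 i := by
        rw [Algebra.algebraMap_eq_smul_one (R := K)]
        nth_rewrite 1 [← Module.Basis.sum_repr c0 1]
        rw [Finset.smul_sum]
        simp [smul_smul]
      rw [h1m]
      refine Submodule.sum_mem _ fun i _ => ?_
      obtain ⟨y, hy⟩ := hb i
      have : d * c0.repr 1 i = algebraMap (𝓞 K) K y := by
        rw [hy, Algebra.smul_def]
      rw [this, algebraMap_smul]
      exact Submodule.smul_mem _ _ (hc0 ▸ Submodule.subset_span ⟨i, rfl⟩)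
    exact key
  have hspp : Submodule.span K (Mp : Set K) = ⊤ := by
    rw [eq_top_iff]
    intro x _
    have hx : x = (x * d⁻¹) • d := (inv_mul_cancel_right₀ hd0 x).symm
    rw [hx]
    exact Submodule.smul_mem _ _ (Submodule.subset_span hdMp)
  obtain ⟨cp0, hcp0⟩ := latticeBasis h1 Mp hfgp hspp
  let cp : Module.Basis (Fin 1) K K := cp0.reindex (finCongr (Module.finrank_self K))
  have hcp : Submodule.span (𝓞 K) (Set.range ⇑cp) = Mp := by
    rw [show Set.range ⇑cp = Set.range ⇑cp0 from Module.Basis.range_reindex cp0 _, hcp0]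
  set a := cp 0 with ha
  have ha0 : a ≠ 0 := cp.ne_zero 0
  have haMp : a ∈ Mp := by
    rw [← hcp]; exact Submodule.subset_span ⟨0, rfl⟩
  have haM : algebraMap K ℍ[K] a ∈ M := haMp
  -- lifts of the imaginary basis
  have hlift : ∀ i : Fin 3, ∃ x, x ∈ M ∧ f x = v i := by
    intro i
    have : v i ∈ Mm := by rw [← hv]; exact Submodule.subset_span ⟨i, rfl⟩
    obtain ⟨x, hx, hfx⟩ := this
    exact ⟨x, hx, hfx⟩
  choose eC heM heV using hlift
  set g : Fin 4 → ℍ[K] := Fin.cons (algebraMap K ℍ[K] a) eC with hg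
  have heli : LinearIndependent K eC := by
    refine LinearIndependent.of_comp (imVec K) ?_
    have : ⇑(imVec K) ∘ eC = ⇑v := funext heV
    rw [this]
    exact v.linearIndependent
  have hgli : LinearIndependent K g := by
    rw [hg, linearIndependent_fin_cons]
    refine ⟨heli, fun hmem => ?_⟩
    rw [Submodule.mem_span_range_iff_exists_fun] at hmem
    obtain ⟨k, hk⟩ := hmem
    have h2 := congrArg (imVec K) hk
    rw [map_sum] at h2
    simp only [map_smul] at h2
    have heV' : ∀ i, (imVec K) (eC i) = v i := heV
    simp only [heV'] at h2
    have himz : (imVec K) (algebraMap K ℍ[K] a) = 0 := by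
      funext i; fin_cases i <;> simp [imVec]
    rw [himz] at h2
    have hkz := Fintype.linearIndependent_iff.mp v.linearIndependent k h2
    simp only [hkz, zero_smul, Finset.sum_const_zero] at hk
    exact ha0 ((map_eq_zero_iff _ ((algebraMap K ℍ[K]).injective)).mp hk.symm)
  have hcard : Fintype.card (Fin 4) = Module.finrank K ℍ[K] := by
    rw [show Module.finrank K ℍ[K] = 4 from QuaternionAlgebra.finrank_eq_four (-1) 0 (-1)]
    simp
  let cM : Module.Basis (Fin 4) K ℍ[K] := basisOfLinearIndependentOfCardEqFinrank hgli hcard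
  have hcoe : ⇑cM = g := coe_basisOfLinearIndependentOfCardEqFinrank hgli hcard
  have hgspan : Submodule.span (𝓞 K) (Set.range g) = M := by
    apply le_antisymm
    · rw [Submodule.span_le]
      rintro x ⟨i, rfl⟩
      refine Fin.cases ?_ (fun j => ?_) i
      · rw [hg, Fin.cons_zero]; exact haM
      · rw [hg, Fin.cons_succ]; exact heM j
    · intro x hx
      have hmm3 : f x ∈ Submodule.span (𝓞 K) (Set.range ⇑v) := by
        rw [hv]; exact Submodule.mem_map_of_mem hx
      rw [Submodule.mem_span_range_iff_exists_fun] at hmm3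
      obtain ⟨k, hk⟩ := hmm3
      set y := x - ∑ i, k i • eC i with hy
      have hyM : y ∈ M :=
        Submodule.sub_mem _ hx
          (Submodule.sum_mem _ fun i _ => Submodule.smul_mem _ _ (heM i))
      have hfy : f y = 0 := by
        rw [hy, map_sub, map_sum]
        simp only [map_smul, heV]
        rw [hk, sub_self]
      have hyre : y = algebraMap K ℍ[K] y.re := by
        have e0 := congrFun hfy 0
        have e1 := congrFun hfy 1
        have e2 := congrFun hfy 2
        simp only [hf, LinearMap.coe_restrictScalars, imVec, LinearMap.coe_mk,
          AddHom.coe_mk, Pi.zero_apply, Matrix.cons_val_zero, Matrix.cons_val_one,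
          Matrix.head_cons] at e0 e1 e2
        ext <;> simp_all
      have hre : y.re ∈ Mp := by
        have : ℓ y.re ∈ M := by
          rw [show ℓ y.re = algebraMap K ℍ[K] y.re from rfl, ← hyre]
          exact hyM
        exact this
      have hres : y.re ∈ Submodule.span (𝓞 K) {a} := by
        rw [← hcp] at hre
        rwa [show Set.range ⇑cp = {a} from Set.range_unique] at hre
      rw [Submodule.mem_span_singleton] at hres
      obtain ⟨c, hc⟩ := hres
      have hxy : x = y + ∑ i, k i • eC i := by rw [hy, sub_add_cancel]
      rw [hxy, hyre, ← hc]
      have : algebraMap K ℍ[K] (c • a) = c • algebraMap K ℍ[K] a := map_smul ℓ c a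
      rw [this]
      refine Submodule.add_mem _ ?_ ?_
      · exact Submodule.smul_mem _ _
          (Submodule.subset_span ⟨0, by rw [hg, Fin.cons_zero]⟩)
      · exact Submodule.sum_mem _ fun i _ => Submodule.smul_mem _ _
          (Submodule.subset_span ⟨i.succ, by rw [hg, Fin.cons_succ]⟩)
  have hdet : (id (QuaternionAlgebra.basisOneIJK (-1 : K) 0 (-1)) : Module.Basis (Fin 4) K ℍ[K]).det ⇑cM
      = a * (Pi.basisFun K (Fin 3)).det ⇑v := by
    rw [Module.Basis.det_apply, Module.Basis.det_apply]
    set A := (id (QuaternionAlgebra.basisOneIJK (-1 : K) 0 (-1)) : Module.Basis (Fin 4) K ℍ[K]).toMatrix ⇑cM with hA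
    have hAe : ∀ i j, A i j
        = ![(cM j).re, (cM j).imI, (cM j).imJ, (cM j).imK] i := by
      intro i j
      rw [hA, Module.Basis.toMatrix_apply]
      rw [show (((id (QuaternionAlgebra.basisOneIJK (-1 : K) 0 (-1)) : Module.Basis (Fin 4) K ℍ[K])).repr (cM j)) i
        = ![(cM j).re, (cM j).imI, (cM j).imJ, (cM j).imK] i from
        congrFun (QuaternionAlgebra.coe_basisOneIJK_repr _ _ _ (cM j)) i]
    rw [Matrix.det_succ_column_zero]
    rw [Finset.sum_eq_single 0]
    · have hA00 : A 0 0 = a := by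
        rw [hAe, hcoe, hg]
        simp [Fin.cons_zero]
      have hsub : A.submatrix (Fin.succAbove 0) Fin.succ
          = (Pi.basisFun K (Fin 3)).toMatrix ⇑v := by
        ext i j
        rw [Matrix.submatrix_apply, Fin.succAbove_zero, hAe]
        rw [Module.Basis.toMatrix_apply, Pi.basisFun_repr]
        rw [hcoe, hg, Fin.cons_succ]
        rw [← heV j]
        fin_cases i <;> simp [hf, imVec]
      rw [hA00, hsub]
      simp
    · intro i _ hi0
      have : A i 0 = 0 := by
        rw [hAe, hcoe, hg]
        simp only [Fin.cons_zero]
        fin_cases i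
        · exact absurd rfl hi0
        all_goals simp
      rw [this]; ring
    · intro h; exact absurd (Finset.mem_univ _) h
  exact ⟨cM, cp, v, by rw [hcoe]; exact hgspan, hcp, hv, hdet⟩

end Aux

/-- If `J ⊆ I` are full `𝓞 K`-lattices (ideals) in `ℍ(K)`, then the `K`-index
`[I : J]_K` factors as `[I ∩ K : J ∩ K]_K · [Im(I) : Im(J)]_K`: if `φ`, `ψ`, `χ` are
injective `K`-linear maps carrying `I` onto `J`, `I ∩ K` onto `J ∩ K`, and `Im(I)`
onto `Im(J)` respectively, then the principal ideals of `𝓞 K` generated by `det φ`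
and by `det ψ · det χ` coincide. -/
theorem stmt10 {K : Type*} [Field K] [NumberField K]
    (h1 : IsPrincipalIdealRing (𝓞 K))
    (I J : Submodule (𝓞 K) ℍ[K]) (hJI : J ≤ I) (hIfg : I.FG) (hJfg : J.FG)
    (hIspan : Submodule.span K (I : Set ℍ[K]) = ⊤)
    (hJspan : Submodule.span K (J : Set ℍ[K]) = ⊤)
    (φ : ℍ[K] →ₗ[K] ℍ[K]) (hφinj : Function.Injective φ)
    (hφ : Submodule.map (φ.restrictScalars (𝓞 K)) I = J)
    (ψ : K →ₗ[K] K) (hψinj : Function.Injective ψ)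
    (hψ : Submodule.map (ψ.restrictScalars (𝓞 K))
        (Submodule.comap ((Algebra.linearMap K ℍ[K]).restrictScalars (𝓞 K)) I)
      = Submodule.comap ((Algebra.linearMap K ℍ[K]).restrictScalars (𝓞 K)) J)
    (χ : (Fin 3 → K) →ₗ[K] (Fin 3 → K)) (hχinj : Function.Injective χ)
    (hχ : Submodule.map (χ.restrictScalars (𝓞 K))
        (Submodule.map ((imVec K).restrictScalars (𝓞 K)) I)
      = Submodule.map ((imVec K).restrictScalars (𝓞 K)) J) :
    Submodule.span (𝓞 K) {LinearMap.det φ}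
      = Submodule.span (𝓞 K) {LinearMap.det ψ * LinearMap.det χ} := by
  classical
  haveI := h1
  obtain ⟨cI, cpI, vI, hcI, hcpI, hvI, hdI⟩ := adapted h1 I hIfg hIspan
  obtain ⟨cJ, cpJ, vJ, hcJ, hcpJ, hvJ, hdJ⟩ := adapted h1 J hJfg hJspan
  set sH := (id (QuaternionAlgebra.basisOneIJK (-1 : K) 0 (-1)) : Module.Basis (Fin 4) K ℍ[K]) with hsH
  set s1 := Module.Basis.singleton (Fin 1) K with hs1
  set s3 := Pi.basisFun K (Fin 3) with hs3
  have e1 := index_span sH φ hφinj hφ cI cJ hcI hcJ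
  have e2 := index_span s1 ψ hψinj hψ cpI cpJ hcpI hcpJ
  have e3 := index_span s3 χ hχinj hχ vI vJ hvI hvJ
  have hs1I : s1.det ⇑cpI = cpI 0 := by
    rw [Module.Basis.det_apply, Matrix.det_fin_one, Module.Basis.toMatrix_apply, hs1,
      Module.Basis.singleton_repr]
  have hs1J : s1.det ⇑cpJ = cpJ 0 := by
    rw [Module.Basis.det_apply, Matrix.det_fin_one, Module.Basis.toMatrix_apply, hs1,
      Module.Basis.singleton_repr]
  set a := cpI 0 with hadef
  set b := cpJ 0 with hbdef
  set dv := s3.det ⇑vI with hdv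
  set dw := s3.det ⇑vJ with hdw
  have ha0 : a ≠ 0 := cpI.ne_zero 0
  have hdv0 : dv ≠ 0 := (s3.isUnit_det vI).ne_zero
  refine e1.trans ?_
  refine Eq.symm ?_
  calc Submodule.span (𝓞 K) {LinearMap.det ψ * LinearMap.det χ}
      = Submodule.span (𝓞 K) {LinearMap.det ψ} * Submodule.span (𝓞 K) {LinearMap.det χ} := by
        rw [Submodule.span_mul_span, Set.singleton_mul_singleton]
    _ = Submodule.span (𝓞 K) {b * a⁻¹} * Submodule.span (𝓞 K) {dw * dv⁻¹} := by
        rw [e2, e3, hs1I, hs1J]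
    _ = Submodule.span (𝓞 K) {(b * a⁻¹) * (dw * dv⁻¹)} := by
        rw [Submodule.span_mul_span, Set.singleton_mul_singleton]
    _ = Submodule.span (𝓞 K) {sH.det ⇑cJ * (sH.det ⇑cI)⁻¹} := by
        rw [hdI, hdJ]
        congr 1
        rw [Set.singleton_eq_singleton_iff]
        field_simp
end

section
/- If L' ⊆ L are orders in ℍ(K), then [L : L'] = [Im(L) : Im(L')], i.e., the index of L' in L equals the index of the projected module Im(L') in Im(L). -/
open Quaternion NumberField

/-- If `L' ⊆ L` are orders in `ℍ(K)`, then `[L : L'] = [Im(L) : Im(L')]`: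
the index of `L'` in `L` equals the index of the projected module `Im(L')`
in `Im(L)`. -/
theorem stmt11 {K : Type*} [Field K] [NumberField K]
    (L L' : Subalgebra (𝓞 K) ℍ[K]) (hle : L' ≤ L)
    (hfg : L.toSubmodule.FG) (hfg' : L'.toSubmodule.FG)
    (hspan : Submodule.span K (L : Set ℍ[K]) = ⊤)
    (hspan' : Submodule.span K (L' : Set ℍ[K]) = ⊤) :
    Nat.card (L.toSubmodule ⧸
        Submodule.comap L.toSubmodule.subtype L'.toSubmodule)
      = Nat.card ((Submodule.map ((imVec K).restrictScalars (𝓞 K)) L.toSubmodule) ⧸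
          Submodule.comap
            (Submodule.map ((imVec K).restrictScalars (𝓞 K)) L.toSubmodule).subtype
            (Submodule.map ((imVec K).restrictScalars (𝓞 K)) L'.toSubmodule)) := by
  classical
  set g := (imVec K).restrictScalars (𝓞 K) with hg
  set M := Submodule.map g L.toSubmodule with hM
  set N := Submodule.map g L'.toSubmodule with hN
  set N' := Submodule.comap M.subtype N with hN'
  have key : ∀ x : ℍ[K], x ∈ L → g x ∈ N → x ∈ L' := by
    intro x hx hgx
    obtain ⟨y, hy, hgy⟩ := hgx
    have hgy' : imVec K y = imVec K x := hgy
    have heq : x - y = algebraMap K ℍ[K] ((x - y).re) := by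
      have h0 : imVec K (x - y) = 0 := by rw [map_sub, hgy', sub_self]
      have h1 : (x - y).imI = 0 := congrFun h0 0
      have h2 : (x - y).imJ = 0 := congrFun h0 1
      have h3 : (x - y).imK = 0 := congrFun h0 2
      ext <;> simp [h1, h2, h3]
    have hint : IsIntegral (𝓞 K) (x - y) :=
      IsIntegral.of_mem_of_fg L hfg _ (sub_mem hx (hle hy))
    rw [heq] at hint
    have hinj : Function.Injective (algebraMap K ℍ[K]) := (algebraMap K ℍ[K]).injective
    have hc : IsIntegral (𝓞 K) ((x - y).re) := (isIntegral_algebraMap_iff hinj).mp hint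
    obtain ⟨d, hd⟩ := IsIntegrallyClosed.isIntegral_iff.mp hc
    have hx' : x = y + algebraMap (𝓞 K) ℍ[K] d := by
      rw [IsScalarTower.algebraMap_apply (𝓞 K) K ℍ[K], hd, ← heq]; abel
    rw [hx']
    exact add_mem hy (Subalgebra.algebraMap_mem L' d)
  let φ : L.toSubmodule →ₗ[𝓞 K] M ⧸ N' := N'.mkQ.comp (g.submoduleMap L.toSubmodule)
  have hsurj : Function.Surjective φ :=
    N'.mkQ_surjective.comp (g.submoduleMap_surjective L.toSubmodule)
  have hker : LinearMap.ker φ = Submodule.comap L.toSubmodule.subtype L'.toSubmodule := by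
    ext x
    simp only [φ, LinearMap.mem_ker, LinearMap.comp_apply, Submodule.mkQ_apply,
      Submodule.Quotient.mk_eq_zero, Submodule.mem_comap]
    constructor
    · intro h
      have h2 : g (x : ℍ[K]) ∈ N := by
        have := h
        replace this : g (x : ℍ[K]) ∈ N := (Submodule.Quotient.mk_eq_zero N').mp this
        simpa using this
      exact key x x.2 h2
    · intro h
      refine (Submodule.Quotient.mk_eq_zero N' (x := g.submoduleMap L.toSubmodule x)).mpr (show g (x : ℍ[K]) ∈ N from ?_)
      have : g (x : ℍ[K]) ∈ N := ⟨(x : ℍ[K]), h, rfl⟩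
      simpa using this
  calc Nat.card (L.toSubmodule ⧸ Submodule.comap L.toSubmodule.subtype L'.toSubmodule)
      = Nat.card (L.toSubmodule ⧸ LinearMap.ker φ) :=
        Nat.card_congr (Submodule.quotEquivOfEq _ _ hker.symm).toEquiv
    _ = Nat.card (M ⧸ N') := Nat.card_congr (φ.quotKerEquivOfSurjective hsurj).toEquiv
end

section
/- For an order L in ℍ(K) and any nonzero q ∈ L, the intersection of the pure parts equals the pure part of the intersection: Im(L) ∩ Im(q L q⁻¹) = Im(L ∩ q L q⁻¹). -/
open Quaternion NumberField


theorem isIntegral_sub_of_commute {R A : Type*} [CommRing R] [Ring A] [Algebra R A]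
    {x y : A} (h : Commute x y) (hx : IsIntegral R x) (hy : IsIntegral R y) :
    IsIntegral R (x - y) := by
  let S := Algebra.adjoin R ({x, y} : Set A)
  letI : CommRing S := Algebra.adjoinCommRingOfComm R (by
    rintro a (rfl | rfl) b (rfl | rfl)
    · rfl
    · exact h
    · exact h.symm
    · rfl)
  have hxS : x ∈ S := Algebra.subset_adjoin (by simp)
  have hyS : y ∈ S := Algebra.subset_adjoin (by simp)
  have hx' : IsIntegral R (⟨x, hxS⟩ : S) :=
    (isIntegral_algHom_iff S.val Subtype.val_injective).mp hx
  have hy' : IsIntegral R (⟨y, hyS⟩ : S) :=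
    (isIntegral_algHom_iff S.val Subtype.val_injective).mp hy
  have := (isIntegral_algHom_iff S.val Subtype.val_injective).mpr (hx'.sub hy')
  simpa using this


instance instIsScalarTowerRingOfIntegersQuaternion (K : Type*) [Field K] [NumberField K] :
    IsScalarTower (𝓞 K) ℍ[K] ℍ[K] := IsScalarTower.right

instance instSMulCommClassRingOfIntegersQuaternion (K : Type*) [Field K] [NumberField K] :
    SMulCommClass (𝓞 K) ℍ[K] ℍ[K] := Algebra.to_smulCommClass

/-- For an order `L` in `ℍ(K)` and any nonzero `q ∈ L` (with two-sided inverse `p`),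
the intersection of the pure parts equals the pure part of the intersection:
`Im(L) ∩ Im(q L q⁻¹) = Im(L ∩ q L q⁻¹)`. -/
theorem stmt13 {K : Type*} [Field K] [NumberField K]
    (L : Subalgebra (𝓞 K) ℍ[K]) (hfg : L.toSubmodule.FG)
    (hspan : Submodule.span K (L : Set ℍ[K]) = ⊤)
    (q p : ℍ[K]) (hqL : q ∈ L) (hq : q ≠ 0)
    (hqp : q * p = 1) (hpq : p * q = 1) :
    Submodule.map ((imVec K).restrictScalars (𝓞 K))
        (L.toSubmodule ⊓
          Submodule.map ((LinearMap.mulRight (𝓞 K) p).comp (LinearMap.mulLeft (𝓞 K) q))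
            L.toSubmodule)
      = Submodule.map ((imVec K).restrictScalars (𝓞 K)) L.toSubmodule ⊓
        Submodule.map ((imVec K).restrictScalars (𝓞 K))
          (Submodule.map ((LinearMap.mulRight (𝓞 K) p).comp (LinearMap.mulLeft (𝓞 K) q))
            L.toSubmodule) := by
  set f := (LinearMap.mulRight (𝓞 K) p).comp (LinearMap.mulLeft (𝓞 K) q) with hf
  have hfapp : ∀ x : ℍ[K], f x = q * x * p := fun x => rfl
  -- the conjugate order as a subalgebra
  let L' : Subalgebra (𝓞 K) ℍ[K] :=
    { carrier := (Submodule.map f L.toSubmodule : Set ℍ[K])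
      add_mem' := fun ha hb => Submodule.add_mem _ ha hb
      mul_mem' := by
        rintro _ _ ⟨a, ha, rfl⟩ ⟨b, hb, rfl⟩
        refine ⟨a * b, L.mul_mem ha hb, ?_⟩
        simp only [hfapp, mul_assoc]
        rw [← mul_assoc p q, hpq, one_mul]
      algebraMap_mem' := fun r => ⟨algebraMap (𝓞 K) ℍ[K] r, Subalgebra.algebraMap_mem L r, by
        simp only [hfapp]
        rw [mul_assoc, Algebra.commutes, ← mul_assoc, hqp, one_mul]⟩ }
  have hL'mem : ∀ {x : ℍ[K]}, x ∈ Submodule.map f L.toSubmodule ↔ x ∈ L' := fun {x} => Iff.rfl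
  have hL'fg : L'.toSubmodule.FG := hfg.map f
  refine le_antisymm (Submodule.map_inf_le _) ?_
  rintro v ⟨⟨x, hxL, hxv⟩, ⟨y, hyL', hyv⟩⟩
  -- x ∈ L, y ∈ qLq⁻¹ with same imaginary part
  have him := hxv.trans hyv.symm
  have h1 : x.imI = y.imI := by simpa [imVec] using congr_fun him 0
  have h2 : x.imJ = y.imJ := by simpa [imVec] using congr_fun him 1
  have h3 : x.imK = y.imK := by simpa [imVec] using congr_fun him 2
  set r : K := x.re - y.re with hr
  have hxy : x - y = algebraMap K ℍ[K] r := by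
    ext <;> simp [h1, h2, h3, hr]
  have hcomm : Commute x y := by
    have hy' : y = x - algebraMap K ℍ[K] r := by rw [← hxy]; abel
    rw [hy']
    exact (Commute.refl x).sub_right (Algebra.commutes r x).symm
  have hxint : IsIntegral (𝓞 K) x := IsIntegral.of_mem_of_fg L hfg x hxL
  have hyint : IsIntegral (𝓞 K) y := IsIntegral.of_mem_of_fg L' hL'fg y (hL'mem.mp hyL')
  have hrint : IsIntegral (𝓞 K) r := by
    have : IsIntegral (𝓞 K) (algebraMap K ℍ[K] r) := hxy ▸ isIntegral_sub_of_commute hcomm hxint hyint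
    exact (isIntegral_algebraMap_iff (algebraMap K ℍ[K]).injective).mp this
  obtain ⟨s, hs⟩ := IsIntegrallyClosed.isIntegral_iff.mp hrint
  -- x itself lies in the intersection
  have hxL' : x ∈ L' := by
    have : x = y + algebraMap (𝓞 K) ℍ[K] s := by
      rw [IsScalarTower.algebraMap_apply (𝓞 K) K ℍ[K], hs, ← hxy]; abel
    rw [this]
    exact add_mem (hL'mem.mp hyL') (Subalgebra.algebraMap_mem L' s)
  exact ⟨x, ⟨hxL, hL'mem.mpr hxL'⟩, hxv⟩
end

section
/- Let O be a maximal order in a quaternion algebra ℍ(K) of class number 1, and let q ∈ O be O-primitive with π ∈ O_K a prime dividing nr(q). Then q factors as q = r·p with r, p ∈ O and nr(p) an associate of π. -/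
open Quaternion NumberField

open Quaternion NumberField

lemma isIntegral_add_and_mul_of_comm {R B : Type*} [CommRing R] [Ring B] [Algebra R B]
    {x y : B} (h : x * y = y * x) (hx : IsIntegral R x) (hy : IsIntegral R y) :
    IsIntegral R (x + y) ∧ IsIntegral R (x * y) := by
  have hcomm : ∀ a ∈ ({x, y} : Set B), ∀ b ∈ ({x, y} : Set B), a * b = b * a := by
    rintro a (rfl | rfl) b (rfl | rfl)
    · rfl
    · exact h
    · exact h.symm
    · rfl
  letI : CommRing (Algebra.adjoin R ({x, y} : Set B)) :=
    Algebra.adjoinCommRingOfComm R hcomm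
  have hxS : x ∈ Algebra.adjoin R ({x, y} : Set B) :=
    Algebra.subset_adjoin (Set.mem_insert _ _)
  have hyS : y ∈ Algebra.adjoin R ({x, y} : Set B) :=
    Algebra.subset_adjoin (Set.mem_insert_of_mem _ rfl)
  have h1 : IsIntegral R (⟨x, hxS⟩ : Algebra.adjoin R ({x, y} : Set B)) :=
    (isIntegral_algHom_iff (Algebra.adjoin R ({x, y} : Set B)).val
      Subtype.val_injective).mp hx
  have h2 : IsIntegral R (⟨y, hyS⟩ : Algebra.adjoin R ({x, y} : Set B)) :=
    (isIntegral_algHom_iff (Algebra.adjoin R ({x, y} : Set B)).val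
      Subtype.val_injective).mp hy
  constructor
  · have := (isIntegral_algHom_iff (Algebra.adjoin R ({x, y} : Set B)).val
      Subtype.val_injective).mpr (h1.add h2)
    simpa using this
  · have := (isIntegral_algHom_iff (Algebra.adjoin R ({x, y} : Set B)).val
      Subtype.val_injective).mpr (h1.mul h2)
    simpa using this

section Aux

variable {K : Type*} [Field K] [NumberField K]

lemma stmt15_coe_algebraMap (c : 𝓞 K) :
    algebraMap (𝓞 K) ℍ[K] c = ((algebraMap (𝓞 K) K c : K) : ℍ[K]) := by
  rw [IsScalarTower.algebraMap_apply (𝓞 K) K ℍ[K]]; rfl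

lemma stmt15_star_algebraMap (c : 𝓞 K) :
    star (algebraMap (𝓞 K) ℍ[K] c) = algebraMap (𝓞 K) ℍ[K] c := by
  rw [stmt15_coe_algebraMap, Quaternion.star_coe]

lemma stmt15_star_smul (c : 𝓞 K) (y : ℍ[K]) : star (c • y) = c • star y := by
  erw [Algebra.smul_def, Algebra.smul_def, star_mul, stmt15_star_algebraMap,
    ← Algebra.commutes]

lemma stmt15_aux (O : Subalgebra (𝓞 K) ℍ[K]) (hfg : O.toSubmodule.FG)
    {x : ℍ[K]} (hx : x ∈ O) :
    (∃ t : 𝓞 K, x + star x = algebraMap (𝓞 K) ℍ[K] t) ∧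
    (∃ n : 𝓞 K, normSq x = algebraMap (𝓞 K) K n) := by
  have hxi : IsIntegral (𝓞 K) x := IsIntegral.of_mem_of_fg O hfg x hx
  have hsxi : IsIntegral (𝓞 K) (star x) := by
    obtain ⟨f, hf, hf0⟩ := hxi
    refine ⟨f, hf, ?_⟩
    have key : Polynomial.aeval (star x) f = star (Polynomial.aeval x f) := by
      rw [Polynomial.aeval_eq_sum_range, Polynomial.aeval_eq_sum_range, star_sum]
      refine Finset.sum_congr rfl fun i _ => ?_
      erw [stmt15_star_smul, star_pow]
      rfl
    have hf0' : Polynomial.aeval x f = 0 := hf0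
    have := key.trans (by rw [hf0', star_zero])
    exact this
  have hxi' : IsIntegral (𝓞 K) x := IsIntegral.of_mem_of_fg O hfg x hx
  obtain ⟨haddK, hmulK⟩ := isIntegral_add_and_mul_of_comm
    (by rw [Quaternion.self_mul_star, Quaternion.star_mul_self]) hxi' hsxi
  constructor
  · rw [Quaternion.self_add_star'] at haddK ⊢
    have hco : ((2 * x.re : K) : ℍ[K]) = algebraMap K ℍ[K] (2 * x.re) := rfl
    rw [hco, isIntegral_algebraMap_iff (show Function.Injective ⇑(algebraMap K ℍ[K]) from Quaternion.coe_injective)] at haddK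
    obtain ⟨t, ht⟩ := IsIntegrallyClosed.isIntegral_iff.mp haddK
    exact ⟨t, by rw [stmt15_coe_algebraMap, ht, hco]⟩
  · rw [Quaternion.self_mul_star] at hmulK
    have hco : ((normSq x : K) : ℍ[K]) = algebraMap K ℍ[K] (normSq x) := rfl
    rw [hco, isIntegral_algebraMap_iff (show Function.Injective ⇑(algebraMap K ℍ[K]) from Quaternion.coe_injective)] at hmulK
    obtain ⟨n, hn⟩ := IsIntegrallyClosed.isIntegral_iff.mp hmulK
    exact ⟨n, hn.symm⟩

end Aux

open Quaternion NumberField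

section MainAux
variable {K : Type*} [Field K] [NumberField K]

theorem stmt15' (O : Subalgebra (𝓞 K) ℍ[K]) (hfg : O.toSubmodule.FG)
    (hclass : ∀ I : Submodule (𝓞 K) ℍ[K], I ≤ O.toSubmodule →
      (∀ c ∈ O, ∀ x ∈ I, c * x ∈ I) →
      ∃ d ∈ O, I = Submodule.map (@LinearMap.mulRight (𝓞 K) ℍ[K] _ _ _ IsScalarTower.right d) O.toSubmodule)
    (q : ℍ[K]) (hqO : q ∈ O)
    (hprim : ∀ (α : 𝓞 K) (r : ℍ[K]), r ∈ O →
      q = algebraMap (𝓞 K) ℍ[K] α * r → IsUnit α)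
    (π : 𝓞 K) (hπ : Prime π)
    (hπdvd : ∃ c : 𝓞 K, normSq q = algebraMap (𝓞 K) K (π * c)) :
    ∃ r p : ℍ[K], r ∈ O ∧ p ∈ O ∧ q = r * p ∧
      ∃ u : (𝓞 K)ˣ, normSq p = algebraMap (𝓞 K) K (π * (u : 𝓞 K)) := by
  classical
  have hstar : ∀ x ∈ O, star x ∈ O := by
    intro x hxO
    obtain ⟨⟨t, ht⟩, -⟩ := stmt15_aux O hfg hxO
    have hx' : star x = algebraMap (𝓞 K) ℍ[K] t - x := by
      rw [← ht, add_sub_cancel_left]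
    rw [hx']
    exact O.sub_mem (O.algebraMap_mem t) hxO
  have hnorm : ∀ x ∈ O, ∃ n : 𝓞 K, normSq x = algebraMap (𝓞 K) K n :=
    fun x hxO => (stmt15_aux O hfg hxO).2
  have hcontra : ∀ e : ℍ[K], e ∈ O → q = algebraMap (𝓞 K) ℍ[K] π * e → False :=
    fun e he hqe => hπ.not_isUnit (hprim π e he hqe)
  set I : Submodule (𝓞 K) ℍ[K] :=
    Submodule.map (@LinearMap.mulRight (𝓞 K) ℍ[K] _ _ _ IsScalarTower.right q) O.toSubmodule ⊔
    Submodule.map (@LinearMap.mulRight (𝓞 K) ℍ[K] _ _ _ IsScalarTower.right (algebraMap (𝓞 K) ℍ[K] π)) O.toSubmodule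
    with hIdef
  have hπO : algebraMap (𝓞 K) ℍ[K] π ∈ O := O.algebraMap_mem π
  have hIO : I ≤ O.toSubmodule := by
    apply sup_le
    · rintro _ ⟨a, ha, rfl⟩
      exact O.mul_mem ha hqO
    · rintro _ ⟨a, ha, rfl⟩
      exact O.mul_mem ha hπO
  have hIleft : ∀ c ∈ O, ∀ x ∈ I, c * x ∈ I := by
    intro c hc x hxI
    obtain ⟨y, hy, z, hz, rfl⟩ := Submodule.mem_sup.mp hxI
    rw [mul_add]
    apply Submodule.add_mem_sup
    · obtain ⟨a, ha, rfl⟩ := hy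
      exact ⟨c * a, O.mul_mem hc ha, mul_assoc _ _ _⟩
    · obtain ⟨a, ha, rfl⟩ := hz
      exact ⟨c * a, O.mul_mem hc ha, mul_assoc _ _ _⟩
  obtain ⟨d, hdO, hId⟩ := hclass I hIO hIleft
  have hqI : q ∈ I := Submodule.mem_sup_left ⟨1, O.one_mem, one_mul _⟩
  have hπI : algebraMap (𝓞 K) ℍ[K] π ∈ I := Submodule.mem_sup_right ⟨1, O.one_mem, one_mul _⟩
  rw [hId] at hqI hπI
  obtain ⟨r, hrO, hrd⟩ := hqI
  obtain ⟨s, hsO, hsd⟩ := hπI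
  have hrO : r ∈ O := hrO
  have hsO : s ∈ O := hsO
  have hrd' : q = r * d := by rw [← hrd]; rfl
  have hsd' : algebraMap (𝓞 K) ℍ[K] π = s * d := by rw [← hsd]; rfl
  obtain ⟨nd, hnd⟩ := hnorm d hdO
  obtain ⟨ns, hns⟩ := hnorm s hsO
  have hinj : Function.Injective (algebraMap (𝓞 K) K) := IsFractionRing.injective (𝓞 K) K
  have hkey : ns * nd = π ^ 2 := by
    apply hinj
    rw [map_mul, ← hns, ← hnd, ← map_mul normSq, ← hsd', stmt15_coe_algebraMap,
      Quaternion.normSq_coe, ← map_pow]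
  by_cases hund : IsUnit nd
  · -- d is a unit in O: derive contradiction
    exfalso
    have hds : star d * d = algebraMap (𝓞 K) ℍ[K] nd := by
      rw [Quaternion.star_mul_self, hnd, ← stmt15_coe_algebraMap]
    have hd1' : (star d * algebraMap (𝓞 K) ℍ[K] ↑hund.unit⁻¹) * d = 1 := by
      rw [mul_assoc, Algebra.commutes, ← mul_assoc, hds, ← map_mul,
        IsUnit.mul_val_inv hund, map_one]
    have h1I : (1 : ℍ[K]) ∈ I := by
      rw [hId]
      exact ⟨star d * algebraMap (𝓞 K) ℍ[K] ↑hund.unit⁻¹,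
        O.mul_mem (hstar d hdO) (O.algebraMap_mem _), hd1'⟩
    obtain ⟨y, hy, z, hz, hyz⟩ := Submodule.mem_sup.mp h1I
    obtain ⟨a, haO, rfl⟩ := hy
    obtain ⟨b, hbO, rfl⟩ := hz
    have haO : a ∈ O := haO
    have hbO : b ∈ O := hbO
    change a * q + b * algebraMap (𝓞 K) ℍ[K] π = 1 at hyz
    obtain ⟨c, hcK⟩ := hπdvd
    have hqq : q * star q = algebraMap (𝓞 K) ℍ[K] π * algebraMap (𝓞 K) ℍ[K] c := by
      rw [Quaternion.self_mul_star, hcK, ← stmt15_coe_algebraMap, map_mul]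
    have hsq : star q = a * (q * star q) + b * (algebraMap (𝓞 K) ℍ[K] π * star q) := by
      rw [← mul_assoc, ← mul_assoc, ← add_mul, hyz, one_mul]
    have hc1 : a * (algebraMap (𝓞 K) ℍ[K] π * algebraMap (𝓞 K) ℍ[K] c)
        = algebraMap (𝓞 K) ℍ[K] π * (a * algebraMap (𝓞 K) ℍ[K] c) := by
      rw [← mul_assoc, ← Algebra.commutes π a, mul_assoc]
    have hc2 : b * (algebraMap (𝓞 K) ℍ[K] π * star q)
        = algebraMap (𝓞 K) ℍ[K] π * (b * star q) := by
      rw [← mul_assoc, ← Algebra.commutes π b, mul_assoc]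
    have hsq2 : star q = algebraMap (𝓞 K) ℍ[K] π *
        (a * algebraMap (𝓞 K) ℍ[K] c + b * star q) := by
      calc star q = a * (q * star q) + b * (algebraMap (𝓞 K) ℍ[K] π * star q) := hsq
        _ = algebraMap (𝓞 K) ℍ[K] π * (a * algebraMap (𝓞 K) ℍ[K] c)
            + algebraMap (𝓞 K) ℍ[K] π * (b * star q) := by rw [hqq, hc1, hc2]
        _ = _ := (mul_add _ _ _).symm
    have heO : a * algebraMap (𝓞 K) ℍ[K] c + b * star q ∈ O :=
      O.add_mem (O.mul_mem haO (O.algebraMap_mem c)) (O.mul_mem hbO (hstar q hqO))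
    have hq2 : q = algebraMap (𝓞 K) ℍ[K] π *
        star (a * algebraMap (𝓞 K) ℍ[K] c + b * star q) := by
      conv_lhs => rw [← star_star q, hsq2]
      rw [star_mul, stmt15_star_algebraMap, ← Algebra.commutes]
    exact hcontra _ (hstar _ heO) hq2
  · by_cases huns : IsUnit ns
    · -- s is a unit in O: derive contradiction
      exfalso
      have hss : star s * s = algebraMap (𝓞 K) ℍ[K] ns := by
        rw [Quaternion.star_mul_self, hns, ← stmt15_coe_algebraMap]
      have hs1' : (star s * algebraMap (𝓞 K) ℍ[K] ↑huns.unit⁻¹) * s = 1 := by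
        rw [mul_assoc, Algebra.commutes, ← mul_assoc, hss, ← map_mul,
          IsUnit.mul_val_inv huns, map_one]
      have hd2 : d = algebraMap (𝓞 K) ℍ[K] π *
          (star s * algebraMap (𝓞 K) ℍ[K] ↑huns.unit⁻¹) := by
        conv_lhs => rw [← one_mul d, ← hs1', mul_assoc, ← hsd']
        rw [← Algebra.commutes]
      have hq2 : q = algebraMap (𝓞 K) ℍ[K] π *
          (r * (star s * algebraMap (𝓞 K) ℍ[K] ↑huns.unit⁻¹)) := by
        rw [hrd', hd2, ← mul_assoc, ← Algebra.commutes π r, mul_assoc]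
      exact hcontra _
        (O.mul_mem hrO (O.mul_mem (hstar s hsO) (O.algebraMap_mem _))) hq2
    · -- main case
      have hdvd : π ∣ ns * nd := ⟨π, by rw [hkey, sq]⟩
      rcases (hπ.2.2 ns nd hdvd) with hds | hdd
      · obtain ⟨k, hk⟩ := hds
        have h4 : π = k * nd := by
          apply mul_left_cancel₀ hπ.ne_zero
          calc π * π = π ^ 2 := (sq π).symm
            _ = ns * nd := hkey.symm
            _ = (π * k) * nd := by rw [hk]
            _ = π * (k * nd) := by ring
        rcases hπ.irreducible.isUnit_or_isUnit h4 with h | h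
        · -- IsUnit k : nd = π * k⁻¹
          refine ⟨r, d, hrO, hdO, hrd', ⟨h.unit⁻¹, ?_⟩⟩
          have h6 : π * (↑h.unit⁻¹ : 𝓞 K) = nd := by
            rw [h4, mul_comm k nd, mul_assoc, IsUnit.mul_val_inv h, mul_one]
          rw [hnd, ← h6]
        · exact absurd h hund
      · obtain ⟨m, hm⟩ := hdd
        have h4 : π = ns * m := by
          apply mul_left_cancel₀ hπ.ne_zero
          calc π * π = π ^ 2 := (sq π).symm
            _ = ns * nd := hkey.symm
            _ = ns * (π * m) := by rw [hm]
            _ = π * (ns * m) := by ring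
        rcases hπ.irreducible.isUnit_or_isUnit h4 with h | h
        · exact absurd h huns
        · -- IsUnit m : nd = π * m
          refine ⟨r, d, hrO, hdO, hrd', ⟨h.unit, ?_⟩⟩
          rw [hnd, hm, IsUnit.unit_spec]
end MainAux

/-- Let `O` be a maximal order in the quaternion division algebra `ℍ(K)` of class
number 1 (every left ideal of `O` is principal), and let `q ∈ O` be `O`-primitive
with `π ∈ 𝓞 K` a prime dividing `nr(q)`. Then `q = r·p` with `r, p ∈ O` and
`nr(p)` an associate of `π`. -/
theorem stmt15 {K : Type*} [Field K] [NumberField K]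
    (h1 : IsPrincipalIdealRing (𝓞 K))
    (O : Subalgebra (𝓞 K) ℍ[K]) (hfg : O.toSubmodule.FG)
    (hspan : Submodule.span K (O : Set ℍ[K]) = ⊤)
    (hmax : ∀ O' : Subalgebra (𝓞 K) ℍ[K], O'.toSubmodule.FG →
      Submodule.span K (O' : Set ℍ[K]) = ⊤ → O ≤ O' → O' = O)
    (hdiv : ∀ x : ℍ[K], x ≠ 0 → ∃ y : ℍ[K], x * y = 1 ∧ y * x = 1)
    (hclass : ∀ I : Submodule (𝓞 K) ℍ[K], I ≤ O.toSubmodule →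
      (∀ c ∈ O, ∀ x ∈ I, c * x ∈ I) →
      ∃ d ∈ O, I = Submodule.map (@LinearMap.mulRight (𝓞 K) ℍ[K] _ _ _ IsScalarTower.right d) O.toSubmodule)
    (q : ℍ[K]) (hqO : q ∈ O)
    (hprim : ∀ (α : 𝓞 K) (r : ℍ[K]), r ∈ O →
      q = algebraMap (𝓞 K) ℍ[K] α * r → IsUnit α)
    (π : 𝓞 K) (hπ : Prime π)
    (hπdvd : ∃ c : 𝓞 K, normSq q = algebraMap (𝓞 K) K (π * c)) :
    ∃ r p : ℍ[K], r ∈ O ∧ p ∈ O ∧ q = r * p ∧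
      ∃ u : (𝓞 K)ˣ, normSq p = algebraMap (𝓞 K) K (π * (u : 𝓞 K)) :=
  stmt15' O hfg hclass q hqO hprim π hπ hπdvd
end

section
/- Let O be a maximal order in ℍ(K) with class number 1, q, r ∈ O with q O-primitive. If qO ⊆ rO then O ∩ qOq⁻¹ ⊆ O ∩ rOr⁻¹. -/
open Quaternion NumberField Polynomial

section Helpers

variable {K : Type*} [Field K] [NumberField K]

lemma star_algebraMapOK (α : 𝓞 K) :
    star (algebraMap (𝓞 K) ℍ[K] α) = algebraMap (𝓞 K) ℍ[K] α := by
  rw [IsScalarTower.algebraMap_apply (𝓞 K) K ℍ[K]]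
  exact Quaternion.star_coe _

lemma aeval_star' (p : Polynomial (𝓞 K)) (x : ℍ[K]) :
    aeval (star x) p = star (aeval x p) := by
  induction p using Polynomial.induction_on' with
  | add p q hp hq => rw [map_add, map_add, hp, hq, star_add]
  | monomial n a =>
    rw [aeval_monomial, aeval_monomial, star_mul, star_pow, star_algebraMapOK,
      ← Algebra.commutes]

lemma isIntegral_star' {x : ℍ[K]} (h : IsIntegral (𝓞 K) x) :
    IsIntegral (𝓞 K) (star x) := by
  obtain ⟨p, hm, hp⟩ := h
  refine ⟨p, hm, ?_⟩
  rw [← aeval_def] at hp ⊢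
  rw [aeval_star', hp, star_zero]

lemma scalar_descend {c : K} (h : IsIntegral (𝓞 K) ((c : ℍ[K]))) :
    ∃ α : 𝓞 K, algebraMap (𝓞 K) K α = c := by
  have hinj : Function.Injective (IsScalarTower.toAlgHom (𝓞 K) K ℍ[K]) := by
    have h2 : Function.Injective (algebraMap K ℍ[K]) := RingHom.injective _
    exact h2
  have : IsIntegral (𝓞 K) c := by
    rw [← isIntegral_algHom_iff (IsScalarTower.toAlgHom (𝓞 K) K ℍ[K]) hinj]
    exact h
  exact IsIntegrallyClosed.isIntegral_iff.mp this

lemma coe_eq_algebraMap (c : K) : ((c : ℍ[K])) = algebraMap K ℍ[K] c := rfl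

/-- Key: the subalgebra generated by two commuting integral elements is module-finite. -/
lemma fg_pair {x y : ℍ[K]} (hx : IsIntegral (𝓞 K) x) (hy : IsIntegral (𝓞 K) y)
    (hcomm : Commute x y) :
    (Subalgebra.toSubmodule (Algebra.adjoin (𝓞 K) ({x, y} : Set ℍ[K]))).FG := by
  set Ax := Subalgebra.toSubmodule (Algebra.adjoin (𝓞 K) ({x} : Set ℍ[K])) with hAx
  set Ay := Subalgebra.toSubmodule (Algebra.adjoin (𝓞 K) ({y} : Set ℍ[K])) with hAy
  have hcomm' : ∀ a ∈ Ax, ∀ b ∈ Ay, Commute a b := by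
    intro a ha b hb
    have h1 : Commute y a :=
      Algebra.commute_of_mem_adjoin_singleton_of_commute ha hcomm.symm
    exact (Algebra.commute_of_mem_adjoin_singleton_of_commute hb h1.symm)
  have hxmem : x ∈ (Ax * Ay : Submodule (𝓞 K) ℍ[K]) := by
    have h1 : x ∈ Ax := Algebra.subset_adjoin rfl
    have h2 : (1 : ℍ[K]) ∈ Ay := Subalgebra.one_mem _
    simpa using Submodule.mul_mem_mul h1 h2
  have hymem : y ∈ (Ax * Ay : Submodule (𝓞 K) ℍ[K]) := by
    have h1 : (1 : ℍ[K]) ∈ Ax := Subalgebra.one_mem _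
    have h2 : y ∈ Ay := Algebra.subset_adjoin rfl
    simpa using Submodule.mul_mem_mul h1 h2
  -- the product submodule is a subalgebra
  let N : Subalgebra (𝓞 K) ℍ[K] :=
    { carrier := (Ax * Ay : Submodule (𝓞 K) ℍ[K])
      mul_mem' := by
        intro a b ha hb
        refine Submodule.mul_induction_on ha ?_ ?_
        · intro m hm n hn
          refine Submodule.mul_induction_on hb ?_ ?_
          · intro m' hm' n' hn'
            have heq : m * n * (m' * n') = (m * m') * (n * n') := by
              rw [mul_assoc m n, ← mul_assoc n m', (hcomm' m' hm' n hn).symm.eq,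
                mul_assoc m', ← mul_assoc m]
            rw [heq]
            exact Submodule.mul_mem_mul (Subalgebra.mul_mem _ hm hm')
              (Subalgebra.mul_mem _ hn hn')
          · intro a' b' ha' hb'
            rw [mul_add]
            exact Submodule.add_mem _ ha' hb'
        · intro a' b' ha' hb'
          rw [add_mul]
          exact Submodule.add_mem _ ha' hb'
      add_mem' := fun ha hb => Submodule.add_mem _ ha hb
      one_mem' := by
        have h1 : (1 : ℍ[K]) ∈ Ax := Subalgebra.one_mem _
        have h2 : (1 : ℍ[K]) ∈ Ay := Subalgebra.one_mem _
        simpa using Submodule.mul_mem_mul h1 h2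
      zero_mem' := Submodule.zero_mem _
      algebraMap_mem' := by
        intro r
        have h1 : algebraMap (𝓞 K) ℍ[K] r ∈ Ax := Subalgebra.algebraMap_mem _ r
        have h2 : (1 : ℍ[K]) ∈ Ay := Subalgebra.one_mem _
        simpa using Submodule.mul_mem_mul h1 h2 }
  have hle : Algebra.adjoin (𝓞 K) ({x, y} : Set ℍ[K]) ≤ N := by
    apply Algebra.adjoin_le
    rintro z hz
    rcases hz with rfl | rfl
    · exact hxmem
    · exact hymem
  have hge : ∀ z ∈ (Ax * Ay : Submodule (𝓞 K) ℍ[K]),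
      z ∈ Algebra.adjoin (𝓞 K) ({x, y} : Set ℍ[K]) := by
    intro z hz
    refine Submodule.mul_induction_on hz ?_ ?_
    · intro m hm n hn
      exact Subalgebra.mul_mem _
        (Algebra.adjoin_mono (by simp) hm)
        (Algebra.adjoin_mono (by simp) hn)
    · intro a b ha hb
      exact Subalgebra.add_mem _ ha hb
  have heq : Subalgebra.toSubmodule (Algebra.adjoin (𝓞 K) ({x, y} : Set ℍ[K]))
      = (Ax * Ay : Submodule (𝓞 K) ℍ[K]) :=
    le_antisymm hle hge
  rw [heq]
  exact Submodule.FG.mul hx.fg_adjoin_singleton hy.fg_adjoin_singleton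

lemma isIntegral_add_star' {w : ℍ[K]} (hw : IsIntegral (𝓞 K) w) :
    IsIntegral (𝓞 K) (w + star w) := by
  have hsw : IsIntegral (𝓞 K) (star w) := isIntegral_star' hw
  have hcomm : Commute w (star w) := by
    unfold Commute SemiconjBy
    rw [Quaternion.self_mul_star, Quaternion.star_mul_self]
  refine IsIntegral.of_mem_of_fg _ (fg_pair hw hsw hcomm) _ ?_
  exact Subalgebra.add_mem _ (Algebra.subset_adjoin (by simp)) (Algebra.subset_adjoin (by simp))

end Helpers

instance stmt17_isScalarTower {K : Type*} [Field K] [NumberField K] :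
    IsScalarTower (𝓞 K) ℍ[K] ℍ[K] := IsScalarTower.right

instance stmt17_smulCommClass {K : Type*} [Field K] [NumberField K] :
    SMulCommClass (𝓞 K) ℍ[K] ℍ[K] := Algebra.to_smulCommClass

/-- Let `O` be a maximal order in `ℍ(K)` with class number 1 (every left ideal of
`O` is principal), and `q, r ∈ O` with `q` `O`-primitive (with given two-sided
inverses `q'`, `r'` in `ℍ(K)`). If `qO ⊆ rO`, then `O ∩ qOq⁻¹ ⊆ O ∩ rOr⁻¹`. -/
theorem stmt17 {K : Type*} [Field K] [NumberField K]
    (h1 : IsPrincipalIdealRing (𝓞 K))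
    (O : Subalgebra (𝓞 K) ℍ[K]) (hfg : O.toSubmodule.FG)
    (hspan : Submodule.span K (O : Set ℍ[K]) = ⊤)
    (hmax : ∀ O' : Subalgebra (𝓞 K) ℍ[K], O'.toSubmodule.FG →
      Submodule.span K (O' : Set ℍ[K]) = ⊤ → O ≤ O' → O' = O)
    (hclass : ∀ I : Submodule (𝓞 K) ℍ[K], I ≤ O.toSubmodule →
      (∀ c ∈ O, ∀ x ∈ I, c * x ∈ I) →
      ∃ d ∈ O, I = Submodule.map (LinearMap.mulRight (𝓞 K) d) O.toSubmodule)
    (q r q' r' : ℍ[K]) (hqO : q ∈ O) (hrO : r ∈ O)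
    (hqq' : q * q' = 1) (hq'q : q' * q = 1)
    (hrr' : r * r' = 1) (hr'r : r' * r = 1)
    (hqprim : ∀ (α : 𝓞 K) (s : ℍ[K]), s ∈ O →
      q = algebraMap (𝓞 K) ℍ[K] α * s → IsUnit α)
    (hsub : Submodule.map (LinearMap.mulLeft (𝓞 K) q) O.toSubmodule
      ≤ Submodule.map (LinearMap.mulLeft (𝓞 K) r) O.toSubmodule) :
    O.toSubmodule ⊓
        Submodule.map ((LinearMap.mulRight (𝓞 K) q').comp (LinearMap.mulLeft (𝓞 K) q))
          O.toSubmodule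
      ≤ O.toSubmodule ⊓
        Submodule.map ((LinearMap.mulRight (𝓞 K) r').comp (LinearMap.mulLeft (𝓞 K) r))
          O.toSubmodule := by
  classical
  -- every element of `O` is integral over `𝓞 K`
  have intMem : ∀ w ∈ O, IsIntegral (𝓞 K) w := fun w hw =>
    IsIntegral.of_mem_of_fg O hfg w hw
  -- `O` is closed under quaternion conjugation
  have starMem : ∀ w ∈ O, star w ∈ O := by
    intro w hw
    have ht : IsIntegral (𝓞 K) (w + star w) := isIntegral_add_star' (intMem w hw)
    rw [Quaternion.self_add_star'] at ht
    obtain ⟨α, hα⟩ := scalar_descend ht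
    have hsum : w + star w = algebraMap (𝓞 K) ℍ[K] α := by
      rw [IsScalarTower.algebraMap_apply (𝓞 K) K ℍ[K], hα, ← coe_eq_algebraMap,
        Quaternion.self_add_star']
    have : star w = algebraMap (𝓞 K) ℍ[K] α - w := by
      rw [← hsum, add_sub_cancel_left]
    rw [this]
    exact Subalgebra.sub_mem _ (Subalgebra.algebraMap_mem _ _) hw
  -- reduced norms of elements of `O` lie in `𝓞 K`
  have normMem : ∀ w ∈ O, ∃ ν : 𝓞 K,
      algebraMap (𝓞 K) ℍ[K] ν = star w * w := by
    intro w hw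
    have hmemO : star w * w ∈ O := Subalgebra.mul_mem _ (starMem w hw) hw
    have : IsIntegral (𝓞 K) ((normSq w : K) : ℍ[K]) := by
      rw [← Quaternion.star_mul_self]
      exact intMem _ hmemO
    obtain ⟨ν, hν⟩ := scalar_descend this
    refine ⟨ν, ?_⟩
    rw [IsScalarTower.algebraMap_apply (𝓞 K) K ℍ[K], hν, ← coe_eq_algebraMap,
      Quaternion.star_mul_self]
  -- get `s ∈ O` with `r * s = q`
  obtain ⟨s, hsO, hs⟩ : ∃ s ∈ O, r * s = q := by
    have hq : q ∈ Submodule.map (LinearMap.mulLeft (𝓞 K) q) O.toSubmodule :=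
      ⟨1, Subalgebra.one_mem _, by simp⟩
    obtain ⟨s, hsO, hs⟩ := hsub hq
    exact ⟨s, hsO, hs⟩
  -- the left ideal generated by `star s` and `r`
  set I : Submodule (𝓞 K) ℍ[K] :=
    Submodule.map (LinearMap.mulRight (𝓞 K) (star s)) O.toSubmodule
      ⊔ Submodule.map (LinearMap.mulRight (𝓞 K) r) O.toSubmodule with hIdef
  have hIle : I ≤ O.toSubmodule := by
    apply sup_le
    · rintro _ ⟨a, ha, rfl⟩
      exact Subalgebra.mul_mem _ ha (starMem s hsO)
    · rintro _ ⟨a, ha, rfl⟩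
      exact Subalgebra.mul_mem _ ha hrO
  have hIstab : ∀ c ∈ O, ∀ x ∈ I, c * x ∈ I := by
    intro c hc x hx
    obtain ⟨y, hy, z, hz, rfl⟩ := Submodule.mem_sup.mp hx
    obtain ⟨a, ha, rfl⟩ := hy
    obtain ⟨b, hb, rfl⟩ := hz
    simp only [LinearMap.mulRight_apply]
    have heq : c * (a * star s + b * r) = (c * a) * star s + (c * b) * r := by
      rw [mul_add, ← mul_assoc, ← mul_assoc]
    rw [heq]
    refine Submodule.add_mem _
      (Submodule.mem_sup_left ⟨c * a, Subalgebra.mul_mem _ hc ha, ?_⟩)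
      (Submodule.mem_sup_right ⟨c * b, Subalgebra.mul_mem _ hc hb, ?_⟩) <;>
      simp [LinearMap.mulRight_apply]
  obtain ⟨d, hdO, hI⟩ := hclass I hIle hIstab
  -- `star s = u * d` and `r = v * d`
  obtain ⟨u, huO, hu⟩ : ∃ u ∈ O, u * d = star s := by
    have : star s ∈ I := Submodule.mem_sup_left ⟨1, Subalgebra.one_mem _, by simp⟩
    rw [hI] at this
    obtain ⟨u, huO, hu⟩ := this
    exact ⟨u, huO, hu⟩
  obtain ⟨v, hvO, hv⟩ : ∃ v ∈ O, v * d = r := by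
    have : r ∈ I := Submodule.mem_sup_right ⟨1, Subalgebra.one_mem _, by simp⟩
    rw [hI] at this
    obtain ⟨v, hvO, hv⟩ := this
    exact ⟨v, hvO, hv⟩
  -- the reduced norm of `d`
  obtain ⟨ν, hν⟩ := normMem d hdO
  -- `q = ν • (v * star u)`, so primitivity makes `ν` a unit
  have hdsd : d * star d = algebraMap (𝓞 K) ℍ[K] ν := by
    rw [Quaternion.self_mul_star, ← Quaternion.star_mul_self, hν]
  have hq : q = algebraMap (𝓞 K) ℍ[K] ν * (v * star u) := by
    have hs' : s = star d * star u := by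
      rw [← star_mul, hu, star_star]
    calc q = (v * d) * (star d * star u) := by rw [hv, ← hs', hs]
    _ = v * (d * star d) * star u := by simp only [mul_assoc]
    _ = v * algebraMap (𝓞 K) ℍ[K] ν * star u := by rw [hdsd]
    _ = algebraMap (𝓞 K) ℍ[K] ν * (v * star u) := by
        rw [← Algebra.commutes ν v, mul_assoc]
  have hunit : IsUnit ν :=
    hqprim ν (v * star u) (Subalgebra.mul_mem _ hvO (starMem u huO)) hq
  obtain ⟨μ, hμ⟩ := hunit.exists_left_inv
  -- hence `1 ∈ I`, so `1 = a * star s + b * r` with `a, b ∈ O`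
  have hone : (1 : ℍ[K]) ∈ I := by
    rw [hI]
    refine ⟨algebraMap (𝓞 K) ℍ[K] μ * star d,
      Subalgebra.mul_mem _ (Subalgebra.algebraMap_mem _ _) (starMem d hdO), ?_⟩
    simp only [LinearMap.mulRight_apply]
    rw [mul_assoc, ← hν, ← map_mul, hμ, map_one]
  obtain ⟨y1, hy1, z1, hz1, hyz⟩ := Submodule.mem_sup.mp hone
  obtain ⟨a, haO, rfl⟩ := hy1
  obtain ⟨b, hbO, rfl⟩ := hz1
  simp only [LinearMap.mulRight_apply] at hyz
  -- star the relation : `s * star a + star r * star b = 1`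
  have hkey : s * star a + star r * star b = 1 := by
    have := congrArg star hyz
    rwa [star_add, star_mul, star_mul, star_star, star_one] at this
  -- now the main computation
  rintro x ⟨hxO, hx2⟩
  obtain ⟨y, hyO, hy⟩ := hx2
  change q * y * q' = x at hy
  -- `x * q = q * y`
  have hxq : x * q = q * y := by
    rw [← hy, mul_assoc, mul_assoc, hq'q, mul_one]
  set z : ℍ[K] := s * y * star a + star r * (x * star b) with hzdef
  have hzO : z ∈ O :=
    Subalgebra.add_mem _
      (Subalgebra.mul_mem _ (Subalgebra.mul_mem _ hsO hyO) (starMem a haO))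
      (Subalgebra.mul_mem _ (starMem r hrO)
        (Subalgebra.mul_mem _ hxO (starMem b hbO)))
  have hrz : r * z = x * r := by
    have e1 : r * z = q * y * star a + (r * star r) * (x * star b) := by
      rw [hzdef]
      rw [mul_add]
      congr 1
      · rw [← hs]; simp only [mul_assoc]
      · simp only [mul_assoc]
    have e2 : x * r = q * y * star a + x * (r * star r) * star b := by
      calc x * r = x * r * 1 := by rw [mul_one]
      _ = x * r * (s * star a + star r * star b) := by rw [hkey]
      _ = x * (r * s) * star a + x * r * star r * star b := by
          rw [mul_add]; simp only [mul_assoc]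
      _ = q * y * star a + x * (r * star r) * star b := by
          rw [hs, hxq]; simp only [mul_assoc]
    rw [e1, e2]
    congr 1
    have hcen : r * star r = ((normSq r : K) : ℍ[K]) := Quaternion.self_mul_star r
    rw [hcen, ← Quaternion.coe_commutes]
    simp only [mul_assoc]
  refine ⟨hxO, ⟨z, hzO, ?_⟩⟩
  show r * z * r' = x
  rw [hrz, mul_assoc, hrr', mul_one]
end

section
/- An element q of the Hurwitz order 𝕁 is 𝕁-reduced (no non-unit divisor of q generates a two-sided ideal of 𝕁) if and only if q is 𝕁-primitive and nr(q) is odd. -/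
open Quaternion

/-- Membership in the Hurwitz ring `𝕁 = ⟨1, i, j, (1+i+j+k)/2⟩_ℤ ⊂ ℍ(ℚ)`:
all four coordinates are integers, or all four are half-odd-integers. -/
def IsHurwitz (q : ℍ[ℚ]) : Prop :=
  (∃ a b c d : ℤ, q = (⟨(a : ℚ), (b : ℚ), (c : ℚ), (d : ℚ)⟩ : ℍ[ℚ])) ∨
  (∃ a b c d : ℤ, q =
    (⟨(a : ℚ) + 1/2, (b : ℚ) + 1/2, (c : ℚ) + 1/2, (d : ℚ) + 1/2⟩ : ℍ[ℚ]))

@[simp] lemma hq_neg_mk (a b c d : ℚ) :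
    @Neg.neg ℍ[ℚ] _ (QuaternionAlgebra.mk a b c d) = (QuaternionAlgebra.mk (-a) (-b) (-c) (-d) : ℍ[ℚ]) := rfl
lemma hq_star_gen (x : ℍ[ℚ]) :
    star x = (QuaternionAlgebra.mk x.re (-x.imI) (-x.imJ) (-x.imK) : ℍ[ℚ]) := by
  ext <;> simp
lemma hq_mul_gen (x y : ℍ[ℚ]) :
    x * y =
      (QuaternionAlgebra.mk (x.re * y.re - x.imI * y.imI - x.imJ * y.imJ - x.imK * y.imK)
        (x.re * y.imI + x.imI * y.re + x.imJ * y.imK - x.imK * y.imJ)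
        (x.re * y.imJ - x.imI * y.imK + x.imJ * y.re + x.imK * y.imI)
        (x.re * y.imK + x.imI * y.imJ - x.imJ * y.imI + x.imK * y.re) : ℍ[ℚ]) := by
  ext <;> simp [Quaternion.re_mul, Quaternion.imI_mul, Quaternion.imJ_mul, Quaternion.imK_mul]
@[simp] lemma hq_star_mk (a b c d : ℚ) :
    @star ℍ[ℚ] _ (QuaternionAlgebra.mk a b c d) = (QuaternionAlgebra.mk a (-b) (-c) (-d) : ℍ[ℚ]) := by
  exact hq_star_gen (QuaternionAlgebra.mk a b c d)
@[simp] lemma hq_mk_mul (a b c d : ℚ) (y : ℍ[ℚ]) :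
    @HMul.hMul ℍ[ℚ] ℍ[ℚ] ℍ[ℚ] _ (QuaternionAlgebra.mk a b c d) y =
      (QuaternionAlgebra.mk (a * y.re - b * y.imI - c * y.imJ - d * y.imK)
        (a * y.imI + b * y.re + c * y.imK - d * y.imJ)
        (a * y.imJ - b * y.imK + c * y.re + d * y.imI)
        (a * y.imK + b * y.imJ - c * y.imI + d * y.re) : ℍ[ℚ]) := by
  exact hq_mul_gen (QuaternionAlgebra.mk a b c d) y
@[simp] lemma hq_mul_mk (a b c d : ℚ) (y : ℍ[ℚ]) :
    @HMul.hMul ℍ[ℚ] ℍ[ℚ] ℍ[ℚ] _ y (QuaternionAlgebra.mk a b c d) =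
      (QuaternionAlgebra.mk (y.re * a - y.imI * b - y.imJ * c - y.imK * d)
        (y.re * b + y.imI * a + y.imJ * d - y.imK * c)
        (y.re * c - y.imI * d + y.imJ * a + y.imK * b)
        (y.re * d + y.imI * c - y.imJ * b + y.imK * a) : ℍ[ℚ]) := by
  exact hq_mul_gen y (QuaternionAlgebra.mk a b c d)
@[simp] lemma hq_mk_mul_mk (a b c d e f g h : ℚ) :
    @HMul.hMul ℍ[ℚ] ℍ[ℚ] ℍ[ℚ] _ (QuaternionAlgebra.mk a b c d) (QuaternionAlgebra.mk e f g h) =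
      (QuaternionAlgebra.mk (a * e - b * f - c * g - d * h)
        (a * f + b * e + c * h - d * g)
        (a * g - b * h + c * e + d * f)
        (a * h + b * g - c * f + d * e) : ℍ[ℚ]) := by
  exact hq_mul_gen (QuaternionAlgebra.mk a b c d) (QuaternionAlgebra.mk e f g h)
@[simp] lemma hq_smul_mk (r a b c d : ℚ) :
    @HSMul.hSMul ℚ ℍ[ℚ] ℍ[ℚ] _ r (QuaternionAlgebra.mk a b c d) =
      (QuaternionAlgebra.mk (r * a) (r * b) (r * c) (r * d) : ℍ[ℚ]) := rfl
lemma hq_mk_eq_mk (a b c d e f g h : ℚ) :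
    @Eq ℍ[ℚ] (QuaternionAlgebra.mk a b c d) (QuaternionAlgebra.mk e f g h) ↔
      a = e ∧ b = f ∧ c = g ∧ d = h := QuaternionAlgebra.mk.injEq _ _ _ _ _ _ _ _ ▸ Iff.rfl
lemma hq_normSq_mk (a b c d : ℚ) :
    normSq (R := ℚ) (QuaternionAlgebra.mk a b c d) =
      (QuaternionAlgebra.mk a b c d : ℍ[ℚ]).re ^ 2 + (QuaternionAlgebra.mk a b c d : ℍ[ℚ]).imI ^ 2 +
      (QuaternionAlgebra.mk a b c d : ℍ[ℚ]).imJ ^ 2 + (QuaternionAlgebra.mk a b c d : ℍ[ℚ]).imK ^ 2 :=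
  normSq_def' _

def qI : ℍ[ℚ] := ⟨0,1,0,0⟩
def qJ : ℍ[ℚ] := ⟨0,0,1,0⟩
def qR (t : ℚ) : ℍ[ℚ] := ⟨t,0,0,0⟩
def qOneI : ℍ[ℚ] := ⟨1,1,0,0⟩

lemma hw_qI : IsHurwitz qI := Or.inl ⟨0,1,0,0, by ext <;> simp [qI]⟩
lemma hw_qJ : IsHurwitz qJ := Or.inl ⟨0,0,1,0, by ext <;> simp [qJ]⟩
lemma hw_one : IsHurwitz 1 := Or.inl ⟨1,0,0,0, by ext <;> simp⟩

lemma hw_neg {x : ℍ[ℚ]} (h : IsHurwitz x) : IsHurwitz (-x) := by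
  obtain ⟨a,b,c,d,rfl⟩|⟨a,b,c,d,rfl⟩ := h
  · refine Or.inl ⟨-a,-b,-c,-d, ?_⟩; ext <;> simp
  · refine Or.inr ⟨-a-1,-b-1,-c-1,-d-1, ?_⟩; ext <;> simp <;> push_cast <;> ring

lemma hw_star {x : ℍ[ℚ]} (h : IsHurwitz x) : IsHurwitz (star x) := by
  obtain ⟨a,b,c,d,rfl⟩|⟨a,b,c,d,rfl⟩ := h
  · refine Or.inl ⟨a,-b,-c,-d, ?_⟩; ext <;> simp
  · refine Or.inr ⟨a,-b-1,-c-1,-d-1, ?_⟩; ext <;> simp <;> push_cast <;> ring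

lemma hw_normSq {x : ℍ[ℚ]} (h : IsHurwitz x) : ∃ A : ℤ, normSq x = (A:ℚ) ∧ 0 ≤ A := by
  obtain ⟨a,b,c,d,rfl⟩|⟨a,b,c,d,rfl⟩ := h
  · refine ⟨a^2+b^2+c^2+d^2, ?_, by positivity⟩
    rw [hq_normSq_mk]; push_cast; simp; try ring
  · refine ⟨a^2+b^2+c^2+d^2+a+b+c+d+1, ?_, ?_⟩
    · rw [hq_normSq_mk]; push_cast; simp; try ring
    · nlinarith [sq_nonneg (2*a+1), sq_nonneg (2*b+1), sq_nonneg (2*c+1), sq_nonneg (2*d+1)]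

lemma hw_mul {x y : ℍ[ℚ]} (hx : IsHurwitz x) (hy : IsHurwitz y) : IsHurwitz (x*y) := by
  obtain ⟨a,b,c,d,rfl⟩|⟨a,b,c,d,rfl⟩ := hx <;> obtain ⟨e,f,g,h,rfl⟩|⟨e,f,g,h,rfl⟩ := hy
  · refine Or.inl ⟨a*e-b*f-c*g-d*h, a*f+b*e+c*h-d*g, a*g-b*h+c*e+d*f, a*h+b*g-c*f+d*e, ?_⟩
    ext <;> simp
  · rcases Int.even_or_odd (a+b+c+d) with ⟨m,hm⟩|⟨m,hm⟩
    · have hm' : ((a:ℚ))+b+c+d = (m:ℚ)+m := by exact_mod_cast hm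
      refine Or.inl ⟨a*e-b*f-c*g-d*h + m-b-c-d, a*f+b*e+c*h-d*g + m-d,
          a*g-b*h+c*e+d*f + m-b, a*h+b*g-c*f+d*e + m-c, ?_⟩
      ext <;> simp <;> push_cast <;> linear_combination hm'/2
    · have hm' : ((a:ℚ))+b+c+d = 2*(m:ℚ)+1 := by exact_mod_cast hm
      refine Or.inr ⟨a*e-b*f-c*g-d*h + m-b-c-d, a*f+b*e+c*h-d*g + m-d,
          a*g-b*h+c*e+d*f + m-b, a*h+b*g-c*f+d*e + m-c, ?_⟩
      ext <;> simp <;> push_cast <;> linear_combination hm'/2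
  · rcases Int.even_or_odd (e+f+g+h) with ⟨m,hm⟩|⟨m,hm⟩
    · have hm' : ((e:ℚ))+f+g+h = (m:ℚ)+m := by exact_mod_cast hm
      refine Or.inl ⟨a*e-b*f-c*g-d*h + m-f-g-h, a*f+b*e+c*h-d*g + m-g,
          a*g-b*h+c*e+d*f + m-h, a*h+b*g-c*f+d*e + m-f, ?_⟩
      ext <;> simp <;> push_cast <;> linear_combination hm'/2
    · have hm' : ((e:ℚ))+f+g+h = 2*(m:ℚ)+1 := by exact_mod_cast hm
      refine Or.inr ⟨a*e-b*f-c*g-d*h + m-f-g-h, a*f+b*e+c*h-d*g + m-g,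
          a*g-b*h+c*e+d*f + m-h, a*h+b*g-c*f+d*e + m-f, ?_⟩
      ext <;> simp <;> push_cast <;> linear_combination hm'/2
  · rcases Int.even_or_odd (a+b+c+d+e+f+g+h) with ⟨m,hm⟩|⟨m,hm⟩
    · have hm' : ((a:ℚ))+b+c+d+e+f+g+h = (m:ℚ)+m := by exact_mod_cast hm
      refine Or.inr ⟨a*e-b*f-c*g-d*h + m-b-c-d-f-g-h-1, a*f+b*e+c*h-d*g + m-d-g,
          a*g-b*h+c*e+d*f + m-b-h, a*h+b*g-c*f+d*e + m-c-f, ?_⟩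
      ext <;> simp <;> push_cast <;> linear_combination hm'/2
    · have hm' : ((a:ℚ))+b+c+d+e+f+g+h = 2*(m:ℚ)+1 := by exact_mod_cast hm
      refine Or.inl ⟨a*e-b*f-c*g-d*h + m-b-c-d-f-g-h, a*f+b*e+c*h-d*g + m-d-g+1,
          a*g-b*h+c*e+d*f + m-b-h+1, a*h+b*g-c*f+d*e + m-c-f+1, ?_⟩
      ext <;> simp <;> push_cast <;> linear_combination hm'/2

lemma hw_re_mul_comm (x y : ℍ[ℚ]) : (x*y).re = (y*x).re := by simp; ring

lemma hw_axes {y : ℍ[ℚ]} (hH : IsHurwitz y) (h1 : normSq y = 1) (h0 : y.re = 0) :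
    y = qI ∨ y = -qI ∨ y = qJ ∨ y = -qJ ∨ y = (⟨0,0,0,1⟩:ℍ[ℚ]) ∨ y = (⟨0,0,0,-1⟩:ℍ[ℚ]) := by
  obtain ⟨a,b,c,d,rfl⟩|⟨a,b,c,d,rfl⟩ := hH
  · rw [hq_normSq_mk] at h1
    simp at h0 h1
    have ha : a = 0 := by exact_mod_cast h0
    have h1' : a^2+b^2+c^2+d^2 = 1 := by push_cast at h1; exact_mod_cast h1
    subst ha
    have hb1 : b ≤ 1 := by nlinarith [sq_nonneg (b-1)]
    have hb2 : -1 ≤ b := by nlinarith [sq_nonneg (b+1)]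
    have hc1 : c ≤ 1 := by nlinarith [sq_nonneg (c-1)]
    have hc2 : -1 ≤ c := by nlinarith [sq_nonneg (c+1)]
    have hd1 : d ≤ 1 := by nlinarith [sq_nonneg (d-1)]
    have hd2 : -1 ≤ d := by nlinarith [sq_nonneg (d+1)]
    interval_cases b <;> interval_cases c <;> interval_cases d <;>
      simp_all [qI, qJ, Quaternion.ext_iff, hq_mk_eq_mk]
  · exfalso
    simp at h0
    have : ((2*a + 1 : ℤ) : ℚ) = 0 := by push_cast; linarith [h0]
    have : (2*a + 1 : ℤ) = 0 := by exact_mod_cast this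
    omega

lemma hw_conj_axis {p y c : ℍ[ℚ]} (hp0 : p ≠ 0) (hy : IsHurwitz y)
    (hc : normSq c = 1) (hcre : c.re = 0) (h : p * c = y * p) :
    y = qI ∨ y = -qI ∨ y = qJ ∨ y = -qJ ∨ y = (⟨0,0,0,1⟩:ℍ[ℚ]) ∨ y = (⟨0,0,0,-1⟩:ℍ[ℚ]) := by
  have hnp : normSq p ≠ 0 := normSq_ne_zero.2 hp0
  apply hw_axes hy
  · have h' := congrArg normSq h
    rw [map_mul, map_mul, hc, mul_one] at h'
    have h'' : 1 * normSq p = normSq y * normSq p := by rw [one_mul]; exact h'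
    exact (mul_right_cancel₀ hnp h'').symm
  · have e1 : p * c * star p = y * (p * star p) := by rw [h, mul_assoc]
    have e2 : (p * c * star p).re = y.re * normSq p := by
      rw [e1, self_mul_star]; simp
    have e3 : (p * c * star p).re = 0 := by
      rw [hw_re_mul_comm, ← mul_assoc, star_mul_self]
      simp [hcre]
    rw [e3] at e2
    rcases mul_eq_zero.mp e2.symm with h5 | h5
    · exact h5
    · exact absurd h5 hnp

lemma hw_classify₀ {p : ℍ[ℚ]} (hp0 : p ≠ 0) (hH : IsHurwitz p) {P : ℤ}
    (hP : normSq p = (P:ℚ)) (hPodd : Odd P)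
    (h1 : p * qI = qI * p)
    (h2 : ∃ y, IsHurwitz y ∧ p * qJ = y * p) :
    ∃ (r : ℤ) (u : ℍ[ℚ]), IsHurwitz u ∧ normSq u = 1 ∧ p = (r:ℚ) • u := by
  obtain ⟨y2, hy2H, hy2⟩ := h2
  have h6 := hw_conj_axis hp0 hy2H (by rw [normSq_def']; simp [qJ]) (by simp [qJ]) hy2
  obtain ⟨a,b,c,d,rfl⟩|⟨a,b,c,d,rfl⟩ := hH
  · rw [Quaternion.ext_iff] at h1 hy2
    simp [qI, qJ] at h1 hy2
    have hc : c = 0 := by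
      have : (c:ℚ) = 0 := by linarith [h1.2]
      exact_mod_cast this
    have hd : d = 0 := by
      have : (d:ℚ) = 0 := by linarith [h1.1]
      exact_mod_cast this
    subst hc hd
    rw [hq_normSq_mk] at hP
    simp at hP hy2
    rcases h6 with rfl|rfl|rfl|rfl|rfl|rfl <;> simp [qI, qJ] at hy2
    · exfalso; apply hp0
      have ha : a = 0 := hy2.2.2.1
      have hb : b = 0 := hy2.1
      subst ha hb; ext <;> simp
    · exfalso; apply hp0
      have ha : a = 0 := hy2.2.1
      have hb : b = 0 := hy2.2.2
      subst ha hb; ext <;> simp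
    · refine ⟨a, 1, hw_one, map_one normSq, ?_⟩
      have hb : (b:ℚ) = 0 := by linarith [hy2]
      ext <;> simp [hb]
    · refine ⟨b, qI, hw_qI, by rw [normSq_def']; simp [qI], ?_⟩
      have ha : (a:ℚ) = 0 := by linarith [hy2]
      ext <;> simp [qI, ha]
    · exfalso
      have hb : b = a := hy2.1.symm
      subst hb
      have hP' : P = 2*b^2 := by
        have : ((2*b^2 : ℤ):ℚ) = (P:ℚ) := by push_cast; linarith [hP]
        exact_mod_cast this.symm
      rw [hP'] at hPodd
      exact (Int.not_odd_iff_even.mpr ⟨b^2, by ring⟩) hPodd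
    · exfalso
      have hab : a = -b := by exact_mod_cast hy2.1
      subst hab
      have hP' : P = 2*b^2 := by
        have : ((2*b^2 : ℤ):ℚ) = (P:ℚ) := by push_cast at hP ⊢; linarith [hP]
        exact_mod_cast this.symm
      rw [hP'] at hPodd
      exact (Int.not_odd_iff_even.mpr ⟨b^2, by ring⟩) hPodd
  · exfalso
    rw [Quaternion.ext_iff] at h1
    simp [qI] at h1
    have : ((2*d+1 : ℤ):ℚ) = 0 := by push_cast; linarith [h1.1]
    have : (2*d+1 : ℤ) = 0 := by exact_mod_cast this
    omega

lemma hw_classify_step {p v y1 y2 : ℍ[ℚ]} (hp0 : p ≠ 0) (hH : IsHurwitz p) {P : ℤ}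
    (hP : normSq p = (P:ℚ)) (hPodd : Odd P)
    (hvH : IsHurwitz v) (hvs : star v * v = 1) (hvn : normSq v = 1)
    (hy2H : IsHurwitz y2)
    (h1 : p * qI = y1 * p) (h2 : p * qJ = y2 * p) (hv : v * y1 = qI * v) :
    ∃ (r : ℤ) (u : ℍ[ℚ]), IsHurwitz u ∧ normSq u = 1 ∧ p = (r:ℚ) • u := by
  have hv0 : v ≠ 0 := by
    intro h; rw [h] at hvn; simp at hvn
  have hp'0 : v * p ≠ 0 := mul_ne_zero hv0 hp0
  have hH' : IsHurwitz (v * p) := hw_mul hvH hH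
  have hP' : normSq (v * p) = (P:ℚ) := by rw [map_mul, hvn, one_mul, hP]
  have h1' : (v * p) * qI = qI * (v * p) := by
    rw [mul_assoc, h1, ← mul_assoc, hv, mul_assoc]
  have h2' : (v * p) * qJ = (v * y2 * star v) * (v * p) := by
    rw [mul_assoc, h2, ← mul_assoc]
    rw [mul_assoc (v * y2), ← mul_assoc (star v), hvs, one_mul]
  obtain ⟨r, u, huH, hun, hru⟩ := hw_classify₀ hp'0 hH' hP' hPodd h1'
    ⟨v * y2 * star v, hw_mul (hw_mul hvH hy2H) (hw_star hvH), h2'⟩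
  refine ⟨r, star v * u, hw_mul (hw_star hvH) huH, ?_, ?_⟩
  · rw [map_mul, hun, normSq_star, hvn, one_mul]
  · have : star v * (v * p) = p := by rw [← mul_assoc, hvs, one_mul]
    rw [← this, hru, mul_smul_comm]

lemma hw_classify {p : ℍ[ℚ]} (hp0 : p ≠ 0) (hH : IsHurwitz p) {P : ℤ}
    (hP : normSq p = (P:ℚ)) (hPodd : Odd P)
    (h1 : ∃ y, IsHurwitz y ∧ p * qI = y * p)
    (h2 : ∃ y, IsHurwitz y ∧ p * qJ = y * p) :
    ∃ (r : ℤ) (u : ℍ[ℚ]), IsHurwitz u ∧ normSq u = 1 ∧ p = (r:ℚ) • u := by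
  obtain ⟨y1, hy1H, hy1⟩ := h1
  obtain ⟨y2, hy2H, hy2⟩ := h2
  have h6 := hw_conj_axis hp0 hy1H (by rw [normSq_def']; simp [qI]) (by simp [qI]) hy1
  rcases h6 with rfl|rfl|rfl|rfl|rfl|rfl
  · refine hw_classify_step hp0 hH hP hPodd hw_one ?_ ?_ hy2H hy1 hy2 ?_
    · simp
    · simp [normSq_def']
    · simp
  · refine hw_classify_step (v := qJ) hp0 hH hP hPodd hw_qJ ?_ ?_ hy2H hy1 hy2 ?_
    · ext <;> simp [qJ]
    · simp [hq_normSq_mk, qJ]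
    · ext <;> simp [qI, qJ]
  · refine hw_classify_step (v := ⟨1/2,-1/2,-1/2,-1/2⟩) hp0 hH hP hPodd
      (Or.inr ⟨0,-1,-1,-1, by ext <;> simp <;> norm_num⟩) ?_ ?_ hy2H hy1 hy2 ?_
    · ext <;> simp <;> norm_num
    · simp [hq_normSq_mk]; norm_num
    · ext <;> simp [qI, qJ] <;> norm_num
  · refine hw_classify_step (v := ⟨1/2,1/2,-1/2,1/2⟩) hp0 hH hP hPodd
      (Or.inr ⟨0,0,-1,0, by ext <;> simp <;> norm_num⟩) ?_ ?_ hy2H hy1 hy2 ?_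
    · ext <;> simp <;> norm_num
    · simp [hq_normSq_mk]; norm_num
    · ext <;> simp [qI, qJ] <;> norm_num
  · refine hw_classify_step (v := ⟨1/2,1/2,1/2,1/2⟩) hp0 hH hP hPodd
      (Or.inr ⟨0,0,0,0, by ext <;> simp <;> norm_num⟩) ?_ ?_ hy2H hy1 hy2 ?_
    · ext <;> simp <;> norm_num
    · simp [hq_normSq_mk]; norm_num
    · ext <;> simp [qI] <;> norm_num
  · refine hw_classify_step (v := ⟨1/2,-1/2,-1/2,1/2⟩) hp0 hH hP hPodd
      (Or.inr ⟨0,-1,-1,0, by ext <;> simp <;> norm_num⟩) ?_ ?_ hy2H hy1 hy2 ?_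
    · ext <;> simp <;> norm_num
    · simp [hq_normSq_mk]; norm_num
    · ext <;> simp [qI] <;> norm_num

/-- `q` is `𝕁`-primitive: `q/n ∉ 𝕁` for every integer `n > 1`. -/
def HurwitzPrimitive (q : ℍ[ℚ]) : Prop :=
  ∀ n : ℤ, 1 < n → ¬ ∃ r : ℍ[ℚ], IsHurwitz r ∧ q = (n : ℚ) • r

/-- `p` generates a two-sided ideal of `𝕁`: `p𝕁 = 𝕁p`. -/
def GeneratesTwoSided (p : ℍ[ℚ]) : Prop :=
  {x : ℍ[ℚ] | ∃ y, IsHurwitz y ∧ x = p * y} =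
    {x : ℍ[ℚ] | ∃ y, IsHurwitz y ∧ x = y * p}

/-- `p` is a unit of the Hurwitz ring. -/
def HurwitzUnit (p : ℍ[ℚ]) : Prop :=
  ∃ u : ℍ[ℚ], IsHurwitz u ∧ p * u = 1 ∧ u * p = 1

/-- `q` is `𝕁`-reduced: no non-unit divisor of `q` generates a two-sided ideal. -/
def HurwitzReduced (q : ℍ[ℚ]) : Prop :=
  ∀ p a b : ℍ[ℚ], IsHurwitz p → IsHurwitz a → IsHurwitz b →
    q = a * p * b → GeneratesTwoSided p → HurwitzUnit p

/-- An element `q` of the Hurwitz order `𝕁` is `𝕁`-reduced if and only if `q` is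
`𝕁`-primitive and its reduced norm `nr(q)` is odd. -/
theorem stmt18 (q : ℍ[ℚ]) (hq : IsHurwitz q) :
    HurwitzReduced q ↔ HurwitzPrimitive q ∧ ∃ k : ℤ, normSq q = 2 * k + 1 := by
  constructor
  · intro hred
    constructor
    · rintro n hn ⟨r, hrH, hqr⟩
      have hcomm : ∀ y : ℍ[ℚ], qR (n:ℚ) * y = y * qR (n:ℚ) := by
        intro y; ext <;> simp [qR] <;> ring
      have hgen : GeneratesTwoSided (qR (n:ℚ)) := by
        unfold GeneratesTwoSided
        ext x; simp only [Set.mem_setOf_eq]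
        constructor
        · rintro ⟨y, hy, rfl⟩; exact ⟨y, hy, by rw [hcomm y]⟩
        · rintro ⟨y, hy, rfl⟩; exact ⟨y, hy, by rw [hcomm y]⟩
      have hH : IsHurwitz (qR (n:ℚ)) := Or.inl ⟨n,0,0,0, by ext <;> simp [qR]⟩
      obtain ⟨u, huH, hu1, _⟩ := hred _ 1 r hH hw_one hrH
        (by rw [one_mul]; rw [hqr]; ext <;> simp [qR]) hgen
      obtain ⟨A, hA, hA0⟩ := hw_normSq huH
      have e1 : normSq (qR (n:ℚ)) * normSq u = 1 := by
        rw [← map_mul, hu1, map_one]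
      rw [normSq_def', hA] at e1
      simp [qR] at e1
      have e2 : ((n^2 * A : ℤ):ℚ) = 1 := by push_cast; nlinarith [e1]
      have e3 : (n^2*A : ℤ) = 1 := by exact_mod_cast e2
      rcases (by omega : A = 0 ∨ 1 ≤ A) with rfl | hA1
      · simp at e3
      · nlinarith [e3, hA1, hn]
    · obtain ⟨N, hN, hN0⟩ := hw_normSq hq
      by_contra hodd
      push_neg at hodd
      rcases Int.even_or_odd N with ⟨m, hm⟩ | ⟨m, hm⟩
      swap
      · exact hodd m (by rw [hN]; exact_mod_cast hm)
      obtain ⟨a,b,c,d,rfl⟩|⟨a,b,c,d,rfl⟩ := hq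
      swap
      · exfalso
        rw [hq_normSq_mk] at hN
        simp at hN
        have e : ((a^2+b^2+c^2+d^2+a+b+c+d+1 : ℤ):ℚ) = ((N:ℤ):ℚ) := by
          push_cast; nlinarith [hN]
        have e' : a^2+b^2+c^2+d^2+a+b+c+d+1 = N := by exact_mod_cast e
        obtain ⟨u1, h1⟩ : Even (a^2+a) := by have := Int.even_mul_succ_self a; rwa [show a*(a+1) = a^2+a by ring] at this
        obtain ⟨u2, h2⟩ : Even (b^2+b) := by have := Int.even_mul_succ_self b; rwa [show b*(b+1) = b^2+b by ring] at this
        obtain ⟨u3, h3⟩ : Even (c^2+c) := by have := Int.even_mul_succ_self c; rwa [show c*(c+1) = c^2+c by ring] at this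
        obtain ⟨u4, h4⟩ : Even (d^2+d) := by have := Int.even_mul_succ_self d; rwa [show d*(d+1) = d^2+d by ring] at this
        have : m + m = u1+u1+u2+u2+u3+u3+u4+u4+1 := by linarith [e', hm, h1, h2, h3, h4]
        omega
      · rw [hq_normSq_mk] at hN
        simp at hN
        have e : ((a^2+b^2+c^2+d^2 : ℤ):ℚ) = ((N:ℤ):ℚ) := by
          push_cast; nlinarith [hN]
        have e' : a^2+b^2+c^2+d^2 = N := by exact_mod_cast e
        obtain ⟨u1, h1⟩ : Even (a^2+a) := by have := Int.even_mul_succ_self a; rwa [show a*(a+1) = a^2+a by ring] at this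
        obtain ⟨u2, h2⟩ : Even (b^2+b) := by have := Int.even_mul_succ_self b; rwa [show b*(b+1) = b^2+b by ring] at this
        obtain ⟨u3, h3⟩ : Even (c^2+c) := by have := Int.even_mul_succ_self c; rwa [show c*(c+1) = c^2+c by ring] at this
        obtain ⟨u4, h4⟩ : Even (d^2+d) := by have := Int.even_mul_succ_self d; rwa [show d*(d+1) = d^2+d by ring] at this
        -- a+b+c+d is even
        set r : ℍ[ℚ] := ⟨((a:ℚ)+b)/2, ((b:ℚ)-a)/2, ((c:ℚ)+d)/2, ((d:ℚ)-c)/2⟩ with hr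
        have hrH : IsHurwitz r := by
          rcases Int.even_or_odd (a+b) with ⟨s, hs⟩ | ⟨s, hs⟩
          · -- c+d even too
            have hs' : ((a:ℚ))+b = (s:ℚ)+s := by exact_mod_cast hs
            have hcd : c+d = (u1+u2+u3+u4-m-s)+(u1+u2+u3+u4-m-s) := by linarith [e', hm, h1, h2, h3, h4, hs]
            have hcd' : ((c+d : ℤ):ℚ) = ((u1+u2+u3+u4-m-s : ℤ):ℚ)+((u1+u2+u3+u4-m-s : ℤ):ℚ) := by exact_mod_cast hcd
            push_cast at hcd'
            exact Or.inl ⟨s, s-a, u1+u2+u3+u4-m-s, u1+u2+u3+u4-m-s-c, by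
              ext <;> simp [hr] <;> push_cast <;> linarith [hs', hcd']⟩
          · have hs' : ((a:ℚ))+b = 2*(s:ℚ)+1 := by exact_mod_cast hs
            have hcd : c+d = 2*(u1+u2+u3+u4-m-s-1)+1 := by linarith [e', hm, h1, h2, h3, h4, hs]
            have hcd' : ((c+d : ℤ):ℚ) = 2*((u1+u2+u3+u4-m-s-1 : ℤ):ℚ)+1 := by exact_mod_cast hcd
            push_cast at hcd'
            exact Or.inr ⟨s, s-a, u1+u2+u3+u4-m-s-1, u1+u2+u3+u4-m-s-1-c, by
              ext <;> simp [hr] <;> push_cast <;> linarith [hs', hcd']⟩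
        have hfac : 1 * qOneI * r = (⟨(a:ℚ),(b:ℚ),(c:ℚ),(d:ℚ)⟩ : ℍ[ℚ]) := by
          ext <;> simp [hr, qOneI] <;> ring
        have honeiH : IsHurwitz qOneI := Or.inl ⟨1,1,0,0, by ext <;> simp [qOneI]⟩
        have hgen : GeneratesTwoSided qOneI := by
          unfold GeneratesTwoSided
          ext x; simp only [Set.mem_setOf_eq]
          constructor
          · rintro ⟨y, hy, rfl⟩
            refine ⟨⟨y.re, y.imI, -y.imK, y.imJ⟩, ?_, by ext <;> simp [qOneI] <;> ring⟩
            obtain ⟨e,f,g,h,rfl⟩|⟨e,f,g,h,rfl⟩ := hy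
            · exact Or.inl ⟨e,f,-h,g, by ext <;> simp⟩
            · exact Or.inr ⟨e,f,-h-1,g, by ext <;> simp <;> push_cast <;> ring⟩
          · rintro ⟨y, hy, rfl⟩
            refine ⟨⟨y.re, y.imI, y.imK, -y.imJ⟩, ?_, by ext <;> simp [qOneI] <;> ring⟩
            obtain ⟨e,f,g,h,rfl⟩|⟨e,f,g,h,rfl⟩ := hy
            · exact Or.inl ⟨e,f,h,-g, by ext <;> simp⟩
            · exact Or.inr ⟨e,f,h,-g-1, by ext <;> simp <;> push_cast <;> ring⟩
        obtain ⟨u, huH, hu1, _⟩ := hred _ 1 r honeiH hw_one hrH hfac.symm hgen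
        obtain ⟨A, hA, hA0⟩ := hw_normSq huH
        have e1 : normSq qOneI * normSq u = 1 := by rw [← map_mul, hu1, map_one]
        rw [normSq_def', hA] at e1
        simp [qOneI] at e1
        have e2 : ((2 * A : ℤ):ℚ) = 1 := by push_cast; linarith [e1]
        have e3 : (2*A : ℤ) = 1 := by exact_mod_cast e2
        omega
  · rintro ⟨hprim, k, hk⟩
    intro p a b hpH haH hbH hfac hgen
    have hq0 : q ≠ 0 := by
      intro h; rw [h, map_zero] at hk
      have : (0 : ℤ) = 2*k+1 := by exact_mod_cast hk
      omega
    have hp0 : p ≠ 0 := by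
      intro h; apply hq0; rw [hfac, h, mul_zero, zero_mul]
    obtain ⟨A, hA, hA0⟩ := hw_normSq haH
    obtain ⟨P, hP, hP0⟩ := hw_normSq hpH
    obtain ⟨B, hB, hB0⟩ := hw_normSq hbH
    have eq1 : ((A*P*B : ℤ):ℚ) = ((2*k+1 : ℤ):ℚ) := by
      push_cast
      rw [← hA, ← hP, ← hB, ← map_mul, ← map_mul, ← hfac, hk]
    have eq2 : A*P*B = 2*k+1 := by exact_mod_cast eq1
    have hPodd : Odd P := ((Int.odd_mul.mp ((Int.odd_mul.mp ⟨k, eq2⟩).1)).2)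
    have m1 : ∃ y, IsHurwitz y ∧ p * qI = y * p :=
      (Set.ext_iff.mp hgen (p * qI)).mp ⟨qI, hw_qI, rfl⟩
    have m2 : ∃ y, IsHurwitz y ∧ p * qJ = y * p :=
      (Set.ext_iff.mp hgen (p * qJ)).mp ⟨qJ, hw_qJ, rfl⟩
    obtain ⟨r, u, huH, hun, hru⟩ := hw_classify hp0 hpH hP hPodd m1 m2
    have hq_ru : q = (r:ℚ) • (a*u*b) := by
      rw [hfac, hru, mul_smul_comm, smul_mul_assoc]
    have hr0 : r ≠ 0 := by
      intro h; apply hp0; rw [hru, h]; simp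
    have hcases : r = 1 ∨ r = -1 ∨ 2 ≤ r ∨ r ≤ -2 := by omega
    have habH : IsHurwitz (a*u*b) := hw_mul (hw_mul haH huH) hbH
    rcases hcases with rfl | rfl | hr | hr
    · refine ⟨star p, hw_star hpH, ?_, ?_⟩
      · rw [self_mul_star, hru]; rw [normSq_smul, hun]; norm_num
      · rw [star_mul_self, hru]; rw [normSq_smul, hun]; norm_num
    · refine ⟨star p, hw_star hpH, ?_, ?_⟩
      · rw [self_mul_star, hru]; rw [normSq_smul, hun]; norm_num
      · rw [star_mul_self, hru]; rw [normSq_smul, hun]; norm_num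
    · exact absurd ⟨a*u*b, habH, hq_ru⟩ (hprim r (by omega))
    · refine absurd ⟨-(a*u*b), hw_neg habH, ?_⟩ (hprim (-r) (by omega))
      rw [hq_ru]; push_cast; rw [neg_smul, smul_neg, neg_neg]
end

section
/- Let M, N, O be three maximal orders of a quaternion division algebra ℍ(K) over a number field K. If O ∩ M = O ∩ N, then M = N. -/
open Quaternion NumberField

section AuxStmt19

variable {K : Type*} [Field K] [NumberField K]

instance stmt19.instSMul : SMul (𝓞 K) ℍ[K] := Algebra.toSMul

instance stmt19.instModule : Module (𝓞 K) ℍ[K] := Algebra.toModule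

instance stmt19.instSMulCommClass : SMulCommClass (𝓞 K) ℍ[K] ℍ[K] := Algebra.to_smulCommClass

instance stmt19.instIsScalarTower : IsScalarTower (𝓞 K) ℍ[K] ℍ[K] := IsScalarTower.right

private lemma stmt19.fgOfLe {p q : Submodule (𝓞 K) ℍ[K]} (hq : q.FG) (hpq : p ≤ q) : p.FG := by
  have : IsNoetherian (𝓞 K) q := isNoetherian_of_fg_of_noetherian q hq
  have h1 : (p.comap q.subtype).FG := IsNoetherian.noetherian _
  have h2 := h1.map q.subtype
  rwa [Submodule.map_comap_subtype, inf_eq_right.mpr hpq] at h2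

/-- `J0 O E = {x | O • x ⊆ E}`. -/
def stmt19.J0 (O : Subalgebra (𝓞 K) ℍ[K]) (E : Submodule (𝓞 K) ℍ[K]) :
    Submodule (𝓞 K) ℍ[K] where
  carrier := {x | ∀ o ∈ O, o * x ∈ E}
  add_mem' := by
    intro x y hx hy o ho
    rw [mul_add]
    exact E.add_mem (hx o ho) (hy o ho)
  zero_mem' := by
    intro o ho
    rw [mul_zero]
    exact E.zero_mem
  smul_mem' := by
    intro c x hx o ho
    rw [mul_smul_comm]
    exact E.smul_mem c (hx o ho)

/-- The right order of `J0 O E`. -/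
def stmt19.ORight (O : Subalgebra (𝓞 K) ℍ[K]) (E : Submodule (𝓞 K) ℍ[K]) :
    Submodule (𝓞 K) ℍ[K] where
  carrier := {y | ∀ x ∈ stmt19.J0 O E, x * y ∈ stmt19.J0 O E}
  add_mem' := by
    intro y z hy hz x hx
    rw [mul_add]
    exact (stmt19.J0 O E).add_mem (hy x hx) (hz x hx)
  zero_mem' := by
    intro x hx
    rw [mul_zero]
    exact (stmt19.J0 O E).zero_mem
  smul_mem' := by
    intro c y hy x hx
    rw [mul_smul_comm]
    exact (stmt19.J0 O E).smul_mem c (hy x hx)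

/-- Key absorption lemma: a finitely generated submodule `V` with `O·V ⊆ V` and
`V·V ⊆ V` is contained in the maximal order `O`, since `O + V·O` is an order. -/
private lemma stmt19.lemB (O : Subalgebra (𝓞 K) ℍ[K]) (hOfg : O.toSubmodule.FG)
    (hOspan : Submodule.span K (O : Set ℍ[K]) = ⊤)
    (hOmax : ∀ O' : Subalgebra (𝓞 K) ℍ[K], O'.toSubmodule.FG →
      Submodule.span K (O' : Set ℍ[K]) = ⊤ → O ≤ O' → O' = O)
    (V : Submodule (𝓞 K) ℍ[K]) (hVfg : V.FG)
    (hOV : Subalgebra.toSubmodule O * V ≤ V) (hVV : V * V ≤ V) :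
    V ≤ Subalgebra.toSubmodule O := by
  set 𝔒 := Subalgebra.toSubmodule O with h𝔒
  set W := V * 𝔒 with hW
  have hOO : 𝔒 * 𝔒 ≤ 𝔒 := Submodule.mul_le.2 fun a ha b hb => O.mul_mem ha hb
  have hOW : 𝔒 * W ≤ W := by
    calc 𝔒 * (V * 𝔒) = 𝔒 * V * 𝔒 := (mul_assoc _ _ _).symm
    _ ≤ V * 𝔒 := mul_le_mul' hOV le_rfl
  have hWO : W * 𝔒 ≤ W := by
    calc V * 𝔒 * 𝔒 = V * (𝔒 * 𝔒) := mul_assoc _ _ _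
    _ ≤ V * 𝔒 := mul_le_mul' le_rfl hOO
  have hWW : W * W ≤ W := by
    calc V * 𝔒 * (V * 𝔒) = V * (𝔒 * V) * 𝔒 := by rw [mul_assoc, mul_assoc, mul_assoc]
    _ ≤ V * V * 𝔒 := mul_le_mul' (mul_le_mul' le_rfl hOV) le_rfl
    _ ≤ V * 𝔒 := mul_le_mul' hVV le_rfl
  have hsupmul : (𝔒 ⊔ W) * (𝔒 ⊔ W) ≤ 𝔒 ⊔ W := by
    rw [Submodule.sup_mul, Submodule.mul_sup, Submodule.mul_sup]
    exact sup_le (sup_le (hOO.trans le_sup_left) (hOW.trans le_sup_right))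
      (sup_le (hWO.trans le_sup_right) (hWW.trans le_sup_right))
  have hmul : ∀ x y : ℍ[K], x ∈ (𝔒 ⊔ W) → y ∈ (𝔒 ⊔ W) → x * y ∈ (𝔒 ⊔ W) :=
    fun x y hx hy => hsupmul (Submodule.mul_mem_mul hx hy)
  have h1 : (1 : ℍ[K]) ∈ 𝔒 ⊔ W := Submodule.mem_sup_left O.one_mem
  set O' : Subalgebra (𝓞 K) ℍ[K] := (𝔒 ⊔ W).toSubalgebra h1 hmul with hO'
  have hO'sub : Subalgebra.toSubmodule O' = 𝔒 ⊔ W := rfl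
  have hO'fg : O'.toSubmodule.FG := by
    rw [hO'sub]
    exact hOfg.sup (hVfg.mul hOfg)
  have hO'span : Submodule.span K (O' : Set ℍ[K]) = ⊤ := by
    rw [eq_top_iff, ← hOspan]
    exact Submodule.span_mono fun x hx => Submodule.mem_sup_left hx
  have hOO' : O ≤ O' := fun x hx => Submodule.mem_sup_left hx
  have hEq := hOmax O' hO'fg hO'span hOO'
  intro v hv
  have hvW : v ∈ W := by
    have h1O : (1 : ℍ[K]) ∈ 𝔒 := O.one_mem
    have h' := Submodule.mul_mem_mul hv h1O
    rwa [mul_one] at h'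
  have hvO' : v ∈ O' := Submodule.mem_sup_right hvW
  rw [hEq] at hvO'
  exact hvO'

/-- Common denominators: every element of `ℍ[K]` admits a nonzero denominator
putting it inside a full lattice `M`. -/
private lemma stmt19.exists_den (M : Subalgebra (𝓞 K) ℍ[K])
    (hMspan : Submodule.span K (M : Set ℍ[K]) = ⊤) (x : ℍ[K]) :
    ∃ d : 𝓞 K, d ≠ 0 ∧ algebraMap (𝓞 K) ℍ[K] d * x ∈ M := by
  have hx : x ∈ Submodule.span K (M : Set ℍ[K]) := by rw [hMspan]; exact Submodule.mem_top
  induction hx using Submodule.span_induction with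
  | mem y hy => exact ⟨1, one_ne_zero, by rw [map_one, one_mul]; exact hy⟩
  | zero => exact ⟨1, one_ne_zero, by rw [mul_zero]; exact M.zero_mem⟩
  | add y z hy hz ihy ihz =>
    obtain ⟨d1, hd1, hm1⟩ := ihy
    obtain ⟨d2, hd2, hm2⟩ := ihz
    refine ⟨d1 * d2, mul_ne_zero hd1 hd2, ?_⟩
    rw [mul_add]
    refine M.add_mem ?_ ?_
    · rw [show d1 * d2 = d2 * d1 from mul_comm _ _, map_mul, mul_assoc, ← Algebra.smul_def]
      exact M.smul_mem hm1 d2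
    · rw [map_mul, mul_assoc, ← Algebra.smul_def]
      exact M.smul_mem hm2 d1
  | smul c y hy ih =>
    obtain ⟨d, hd, hm⟩ := ih
    obtain ⟨⟨a, s⟩, hs⟩ := IsLocalization.surj (nonZeroDivisors (𝓞 K)) c
    refine ⟨(s : 𝓞 K) * d,
      mul_ne_zero (mem_nonZeroDivisors_iff_ne_zero.mp s.2) hd, ?_⟩
    have hK : algebraMap (𝓞 K) K ((s : 𝓞 K) * d) * c
        = algebraMap (𝓞 K) K a * algebraMap (𝓞 K) K d := by
      rw [map_mul]
      linear_combination algebraMap (𝓞 K) K d * hs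
    have key : algebraMap (𝓞 K) ℍ[K] ((s : 𝓞 K) * d) * (c • y)
        = a • (algebraMap (𝓞 K) ℍ[K] d * y) := by
      rw [Algebra.smul_def, Algebra.smul_def,
        IsScalarTower.algebraMap_apply (𝓞 K) K ℍ[K] ((s : 𝓞 K) * d),
        IsScalarTower.algebraMap_apply (𝓞 K) K ℍ[K] a,
        IsScalarTower.algebraMap_apply (𝓞 K) K ℍ[K] d,
        ← mul_assoc, ← map_mul, hK, map_mul, mul_assoc]
    rw [key]
    exact M.smul_mem hm a

/-- A single denominator works for all of a finitely generated lattice `O`. -/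
private lemma stmt19.exists_den_all (O M : Subalgebra (𝓞 K) ℍ[K]) (hOfg : O.toSubmodule.FG)
    (hMspan : Submodule.span K (M : Set ℍ[K]) = ⊤) :
    ∃ d : 𝓞 K, d ≠ 0 ∧ ∀ x ∈ O, algebraMap (𝓞 K) ℍ[K] d * x ∈ M := by
  classical
  obtain ⟨S, hS⟩ := hOfg
  choose f hf0 hfm using stmt19.exists_den M hMspan
  refine ⟨∏ s ∈ S, f s, Finset.prod_ne_zero_iff.2 fun s _ => hf0 s, ?_⟩
  have hT : O.toSubmodule ≤ Submodule.comap
      (LinearMap.mulLeft (𝓞 K) (algebraMap (𝓞 K) ℍ[K] (∏ s ∈ S, f s)))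
      (Subalgebra.toSubmodule M) := by
    rw [← hS, Submodule.span_le]
    intro s hs
    simp only [SetLike.mem_coe, Submodule.mem_comap, LinearMap.mulLeft_apply]
    rw [← Finset.prod_erase_mul S f (Finset.mem_coe.mp hs), map_mul, mul_assoc,
      ← Algebra.smul_def]
    exact M.smul_mem (hfm s) _
  exact fun x hx => hT hx

end AuxStmt19

/-- Let `M`, `N`, `O` be three maximal orders of a quaternion division algebra
`ℍ(K)` over a number field `K`. If `O ∩ M = O ∩ N`, then `M = N`. -/
theorem stmt19 {K : Type*} [Field K] [NumberField K]
    (hdiv : ∀ x : ℍ[K], x ≠ 0 → ∃ y : ℍ[K], x * y = 1 ∧ y * x = 1)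
    (M N O : Subalgebra (𝓞 K) ℍ[K])
    (hMfg : M.toSubmodule.FG) (hNfg : N.toSubmodule.FG) (hOfg : O.toSubmodule.FG)
    (hMspan : Submodule.span K (M : Set ℍ[K]) = ⊤)
    (hNspan : Submodule.span K (N : Set ℍ[K]) = ⊤)
    (hOspan : Submodule.span K (O : Set ℍ[K]) = ⊤)
    (hMmax : ∀ O' : Subalgebra (𝓞 K) ℍ[K], O'.toSubmodule.FG →
      Submodule.span K (O' : Set ℍ[K]) = ⊤ → M ≤ O' → O' = M)
    (hNmax : ∀ O' : Subalgebra (𝓞 K) ℍ[K], O'.toSubmodule.FG →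
      Submodule.span K (O' : Set ℍ[K]) = ⊤ → N ≤ O' → O' = N)
    (hOmax : ∀ O' : Subalgebra (𝓞 K) ℍ[K], O'.toSubmodule.FG →
      Submodule.span K (O' : Set ℍ[K]) = ⊤ → O ≤ O' → O' = O)
    (h : O ⊓ M = O ⊓ N) : M = N := by
  classical
  -- The key sublemma: for a maximal order `P` (with the data as in the statement),
  -- `P ≤ ORight O (toSubmodule (O ⊓ P))`.
  have key_le : ∀ P : Subalgebra (𝓞 K) ℍ[K], P.toSubmodule.FG →
      (∀ x y, x ∈ P → y ∈ P → x * y ∈ P) →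
      ∀ x ∈ P, x ∈ stmt19.ORight O (Subalgebra.toSubmodule (O ⊓ P)) := by
    intro P hPfg hPmul
    set E := Subalgebra.toSubmodule (O ⊓ P) with hE
    set J := stmt19.J0 O E with hJdef
    have hJE : J ≤ E := fun x hx => by
      have h1 := hx 1 O.one_mem
      rwa [one_mul] at h1
    have hEO : E ≤ Subalgebra.toSubmodule O := fun x hx => hx.1
    have hEP : E ≤ Subalgebra.toSubmodule P := fun x hx => hx.2
    have hJfg : J.FG := stmt19.fgOfLe hOfg (hJE.trans hEO)
    set V := J * Subalgebra.toSubmodule P with hV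
    have hVfg : V.FG := hJfg.mul hPfg
    have hOJ : Subalgebra.toSubmodule O * J ≤ J := by
      refine Submodule.mul_le.2 fun o ho x hx => ?_
      intro o' ho'
      rw [← mul_assoc]
      exact hx (o' * o) (O.mul_mem ho' ho)
    have hPP : Subalgebra.toSubmodule P * Subalgebra.toSubmodule P
        ≤ Subalgebra.toSubmodule P :=
      Submodule.mul_le.2 fun a ha b hb => hPmul a b ha hb
    have hOV : Subalgebra.toSubmodule O * V ≤ V := by
      rw [hV, ← mul_assoc]
      exact mul_le_mul' hOJ le_rfl
    have hVP : V ≤ Subalgebra.toSubmodule P := by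
      rw [hV]
      exact (mul_le_mul' (hJE.trans hEP) le_rfl).trans hPP
    have hVV : V * V ≤ V := by
      calc V * V ≤ V * Subalgebra.toSubmodule P := mul_le_mul' le_rfl hVP
      _ = J * (Subalgebra.toSubmodule P * Subalgebra.toSubmodule P) := by
          rw [hV, mul_assoc]
      _ ≤ J * Subalgebra.toSubmodule P := mul_le_mul' le_rfl hPP
    have hVO : V ≤ Subalgebra.toSubmodule O :=
      stmt19.lemB O hOfg hOspan hOmax V hVfg hOV hVV
    intro m hm x hx o ho
    have hxmV : x * m ∈ V := Submodule.mul_mem_mul hx hm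
    have hmem : o * (x * m) ∈ O ⊓ P := by
      refine ⟨O.mul_mem ho (hVO hxmV), ?_⟩
      rw [← mul_assoc]
      exact hPmul _ _ (hEP (hx o ho)) hm
    exact hmem
  -- instantiating at `M` and `N`; note `O ⊓ M = O ⊓ N`.
  have hMle : ∀ x ∈ M, x ∈ stmt19.ORight O (Subalgebra.toSubmodule (O ⊓ M)) :=
    key_le M hMfg (fun x y hx hy => M.mul_mem hx hy)
  have hNle : ∀ x ∈ N, x ∈ stmt19.ORight O (Subalgebra.toSubmodule (O ⊓ M)) := by
    rw [h]
    exact key_le N hNfg (fun x y hx hy => N.mul_mem hx hy)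
  set E := Subalgebra.toSubmodule (O ⊓ M) with hE
  set Rm := stmt19.ORight O E with hRm
  -- `Rm` is a subalgebra
  have h1 : (1 : ℍ[K]) ∈ Rm := by
    intro x hx
    rwa [mul_one]
  have hmul : ∀ x y : ℍ[K], x ∈ Rm → y ∈ Rm → x * y ∈ Rm := by
    intro y z hy hz x hx
    rw [← mul_assoc]
    exact hz (x * y) (hy x hx)
  set Ralg : Subalgebra (𝓞 K) ℍ[K] := Rm.toSubalgebra h1 hmul with hRalg
  -- `Rm` is finitely generated
  obtain ⟨d, hd0, hdall⟩ := stmt19.exists_den_all O M hOfg hMspan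
  have hx0J : algebraMap (𝓞 K) ℍ[K] d ∈ stmt19.J0 O E := by
    intro o ho
    have hcomm : o * algebraMap (𝓞 K) ℍ[K] d = algebraMap (𝓞 K) ℍ[K] d * o :=
      (Algebra.commutes d o).symm
    have : o * algebraMap (𝓞 K) ℍ[K] d ∈ O ⊓ M := by
      refine ⟨?_, ?_⟩
      · rw [hcomm, ← Algebra.smul_def]
        exact O.smul_mem ho d
      · rw [hcomm]
        exact hdall o ho
    exact this
  have hJE : stmt19.J0 O E ≤ E := fun x hx => by
    have h1' := hx 1 O.one_mem
    rwa [one_mul] at h1'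
  have hEO : E ≤ Subalgebra.toSubmodule O := fun x hx => hx.1
  have hJfg : (stmt19.J0 O E).FG := stmt19.fgOfLe hOfg (hJE.trans hEO)
  have hinj : Function.Injective
      (LinearMap.mulLeft (𝓞 K) (algebraMap (𝓞 K) ℍ[K] d)) := by
    intro y z hyz
    simp only [LinearMap.mulLeft_apply] at hyz
    have hsm : ∀ w : ℍ[K],
        algebraMap (𝓞 K) ℍ[K] d * w = (algebraMap (𝓞 K) K d) • w := by
      intro w
      rw [IsScalarTower.algebraMap_apply (𝓞 K) K ℍ[K] d, ← Algebra.smul_def]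
    rw [hsm, hsm] at hyz
    have hc0 : algebraMap (𝓞 K) K d ≠ 0 :=
      (map_ne_zero_iff _ (IsFractionRing.injective (𝓞 K) K)).mpr hd0
    have h2 := congrArg (fun w => (algebraMap (𝓞 K) K d)⁻¹ • w) hyz
    simp only [inv_smul_smul₀ hc0] at h2
    exact h2
  have hmaple : Submodule.map (LinearMap.mulLeft (𝓞 K) (algebraMap (𝓞 K) ℍ[K] d)) Rm
      ≤ stmt19.J0 O E := by
    rintro _ ⟨y, hy, rfl⟩
    exact hy _ hx0J
  have hRmfg : Rm.FG :=
    Submodule.fg_of_fg_map_injective _ hinj (stmt19.fgOfLe hJfg hmaple)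
  have hRfg : Ralg.toSubmodule.FG := hRmfg
  have hRspan : Submodule.span K (Ralg : Set ℍ[K]) = ⊤ := by
    rw [eq_top_iff, ← hMspan]
    exact Submodule.span_mono fun x hx => hMle x hx
  have hM' : Ralg = M := hMmax Ralg hRfg hRspan fun x hx => hMle x hx
  have hN' : Ralg = N := hNmax Ralg hRfg hRspan fun x hx => hNle x hx
  rw [← hM', hN']
end
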